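/- ELPAω_lp proves the sequent ⊢ ((halts(x¹·y¹))^L)^⊥, ∀u⁰∃v⁰ A_at(x, y, u, v), where A_at(x,y,u,v) is the quantifier-free formula (given via a closed characteristic term of EPAω) expressing that x(⟨u⟩ * ȳv) ≠₀ 0 and x(⟨u⟩ * ȳw) =₀ 0 for all w < v. -/

import Mathlib

namespace WR

/-- Finite types of `EPAω`: `o` is the type of natural numbers, `arr σ τ` is `σ → τ`. -/
inductive Ty : Type
  | o : Ty
  | arr : Ty → Ty → Ty
  deriving DecidableEq

notation "𝕆" => Ty.o
infixr:60 " ⤳ " => Ty.arr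

/-- The type `1` of number sequences. -/
abbrev Ty1 : Ty := 𝕆 ⤳ 𝕆
/-- The type of binary number functions. -/
abbrev Ty2 : Ty := 𝕆 ⤳ 𝕆 ⤳ 𝕆

/-- Hereditarily computable types: `comp 0 = 1`, `comp (ρ ⤳ τ) = comp ρ ⤳ comp τ`. -/
def Ty.comp : Ty → Ty
  | .o => Ty1
  | .arr ρ τ => .arr ρ.comp τ.comp

/-- Terms of `EPAω`: typed variables, zero, successor, projectors (K), combinators (S),
recursors (R), λ-abstraction and application. -/
inductive Tm : Ty → Type
  | var (n : ℕ) (τ : Ty) : Tm τ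
  | zero : Tm 𝕆
  | succ : Tm (𝕆 ⤳ 𝕆)
  | K (σ τ : Ty) : Tm (σ ⤳ τ ⤳ σ)
  | S (δ ρ τ : Ty) : Tm ((δ ⤳ ρ ⤳ τ) ⤳ (δ ⤳ ρ) ⤳ δ ⤳ τ)
  | R (τ : Ty) : Tm (τ ⤳ (𝕆 ⤳ τ ⤳ τ) ⤳ 𝕆 ⤳ τ)
  | lam {τ : Ty} (n : ℕ) (σ : Ty) : Tm τ → Tm (σ ⤳ τ)
  | app {σ τ : Ty} : Tm (σ ⤳ τ) → Tm σ → Tm τ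

/-- Free variables of a term (as (index, type) pairs). -/
def Tm.fvars : {τ : Ty} → Tm τ → Set (ℕ × Ty)
  | _, .var m ρ => {(m, ρ)}
  | _, .zero => ∅
  | _, .succ => ∅
  | _, .K _ _ => ∅
  | _, .S _ _ _ => ∅
  | _, .R _ => ∅
  | _, .lam m ρ t => Tm.fvars t \ {(m, ρ)}
  | _, .app f a => Tm.fvars f ∪ Tm.fvars a

/-- A term is closed if it has no free variables. -/
def Tm.Closed {τ : Ty} (t : Tm τ) : Prop := t.fvars = ∅

/-- A strict upper bound for all (free or bound) variable indices occurring in a term. -/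
def Tm.maxVar : {τ : Ty} → Tm τ → ℕ
  | _, .var m _ => m + 1
  | _, .zero => 0
  | _, .succ => 0
  | _, .K _ _ => 0
  | _, .S _ _ _ => 0
  | _, .R _ => 0
  | _, .lam m _ t => max (m + 1) (Tm.maxVar t)
  | _, .app f a => max (Tm.maxVar f) (Tm.maxVar a)

/-- Substitution of the term `s` for the variable `(n, σ)` in a term (naive). -/
def Tm.subst : {τ : Ty} → Tm τ → ℕ → {σ : Ty} → Tm σ → Tm τ
  | _, .var m ρ, n, σ, s =>
      if h : m = n ∧ ρ = σ then (by rw [h.2]; exact s) else .var m ρ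
  | _, .zero, _, _, _ => .zero
  | _, .succ, _, _, _ => .succ
  | _, .K σ' τ', _, _, _ => .K σ' τ'
  | _, .S δ ρ τ', _, _, _ => .S δ ρ τ'
  | _, .R τ', _, _, _ => .R τ'
  | _, .lam m ρ t, n, σ, s =>
      if m = n ∧ ρ = σ then .lam m ρ t else .lam m ρ (Tm.subst t n s)
  | _, .app f a, n, _, s => .app (Tm.subst f n s) (Tm.subst a n s)

/-- `s` is free for the variable `(n, σ)` in the term `t`:
no free occurrence of the variable lies in the scope of a binder capturing a
free variable of `s`. -/
def Tm.FreeForIn {σ : Ty} (s : Tm σ) (n : ℕ) : {τ : Ty} → Tm τ → Prop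
  | _, .lam m ρ t =>
      ((n, σ) ∉ Tm.fvars t) ∨ (m = n ∧ ρ = σ) ∨
        (((m, ρ) ∉ s.fvars) ∧ Tm.FreeForIn s n t)
  | _, .app f a => Tm.FreeForIn s n f ∧ Tm.FreeForIn s n a
  | _, _ => True

/-- Variable of type `0`. -/
abbrev v0 (n : ℕ) : Tm 𝕆 := .var n 𝕆
/-- The numeral `1`. -/
def tm1 : Tm 𝕆 := Tm.app Tm.succ Tm.zero

/-- Recursion at type `0`. -/
def recO (y : Tm 𝕆) (z : Tm (𝕆 ⤳ 𝕆 ⤳ 𝕆)) (n : Tm 𝕆) : Tm 𝕆 :=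
  (((Tm.R 𝕆).app y).app z).app n

/-- Addition: `addT a b = a + b`. -/
def addT : Tm Ty2 :=
  .lam 0 𝕆 (.lam 1 𝕆 (recO (v0 0) (.lam 2 𝕆 (.lam 3 𝕆 (Tm.succ.app (v0 3)))) (v0 1)))

/-- Predecessor (with `pred 0 = 0`). -/
def predT : Tm Ty1 :=
  .lam 0 𝕆 (recO .zero (.lam 1 𝕆 (.lam 2 𝕆 (v0 1))) (v0 0))

/-- `condT c a b` equals `a` if `c = 0` and `b` otherwise. -/
def condT : Tm (𝕆 ⤳ 𝕆 ⤳ 𝕆 ⤳ 𝕆) :=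
  .lam 0 𝕆 (.lam 1 𝕆 (.lam 2 𝕆 (recO (v0 1) (.lam 3 𝕆 (.lam 4 𝕆 (v0 2))) (v0 0))))

/-- Cut-off subtraction `a ∸ b`. -/
def monusT : Tm Ty2 :=
  .lam 0 𝕆 (.lam 1 𝕆 (recO (v0 0) (.lam 2 𝕆 (.lam 3 𝕆 (predT.app (v0 3)))) (v0 1)))

/-- Triangular numbers `tri n = 0 + 1 + ⋯ + n`. -/
def triT : Tm Ty1 :=
  .lam 0 𝕆 (recO .zero
    (.lam 1 𝕆 (.lam 2 𝕆 ((addT.app (v0 2)).app (Tm.succ.app (v0 1))))) (v0 0))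

/-- Cantor pairing `j x y = tri (x + y) + y` (injective). -/
def pairT : Tm Ty2 :=
  .lam 0 𝕆 (.lam 1 𝕆
    ((addT.app (triT.app ((addT.app (v0 0)).app (v0 1)))).app (v0 1)))

/-- Signum: `sg 0 = 0`, `sg (n+1) = 1`. -/
def sgT : Tm Ty1 :=
  .lam 0 𝕆 (recO .zero (.lam 1 𝕆 (.lam 2 𝕆 tm1)) (v0 0))

/-- Pointwise pairing of two sequences: `pwPairT u y = λk. j (u k) (y k)`. -/
def pwPairT : Tm (Ty1 ⤳ Ty1 ⤳ Ty1) :=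
  .lam 0 Ty1 (.lam 1 Ty1 (.lam 2 𝕆
    ((pairT.app ((Tm.var 0 Ty1).app (v0 2))).app ((Tm.var 1 Ty1).app (v0 2)))))

/-- `seqCodeT z u v` is the code of the finite sequence `⟨u⟩ * z̄v = (u, z 0, …, z (v-1))`
(coded by iterated injective pairing). -/
def seqCodeT : Tm (Ty1 ⤳ 𝕆 ⤳ 𝕆 ⤳ 𝕆) :=
  .lam 0 Ty1 (.lam 1 𝕆 (.lam 2 𝕆
    (recO (Tm.succ.app ((pairT.app (v0 1)).app .zero))
      (.lam 3 𝕆 (.lam 4 𝕆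
        (Tm.succ.app ((pairT.app ((Tm.var 0 Ty1).app (v0 3))).app (v0 4)))))
      (v0 2))))

/-- `initCodeT z v` is the code of the finite sequence `z̄v = (z 0, …, z (v-1))`. -/
def initCodeT : Tm (Ty1 ⤳ 𝕆 ⤳ 𝕆) :=
  .lam 0 Ty1 (.lam 1 𝕆
    (recO .zero
      (.lam 2 𝕆 (.lam 3 𝕆
        (Tm.succ.app ((pairT.app ((Tm.var 0 Ty1).app (v0 2))).app (v0 3)))))
      (v0 1)))

/-- Formulas of (classical) `EPAω`. The only atomic predicate is equality at type `0`.-/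
inductive CForm : Type
  | eq : Tm 𝕆 → Tm 𝕆 → CForm
  | not : CForm → CForm
  | and : CForm → CForm → CForm
  | or : CForm → CForm → CForm
  | imp : CForm → CForm → CForm
  | all : ℕ → Ty → CForm → CForm
  | ex : ℕ → Ty → CForm → CForm

/-- Free variables of a classical formula. -/
def CForm.fvars : CForm → Set (ℕ × Ty)
  | .eq s t => s.fvars ∪ t.fvars
  | .not A => A.fvars
  | .and A B => A.fvars ∪ B.fvars
  | .or A B => A.fvars ∪ B.fvars
  | .imp A B => A.fvars ∪ B.fvars
  | .all n τ A => A.fvars \ {(n, τ)}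
  | .ex n τ A => A.fvars \ {(n, τ)}

/-- Substitution of a term for a variable in a classical formula (naive). -/
def CForm.substTm (A : CForm) (n : ℕ) {σ : Ty} (s : Tm σ) : CForm :=
  match A with
  | .eq a b => .eq (a.subst n s) (b.subst n s)
  | .not A => .not (A.substTm n s)
  | .and A B => .and (A.substTm n s) (B.substTm n s)
  | .or A B => .or (A.substTm n s) (B.substTm n s)
  | .imp A B => .imp (A.substTm n s) (B.substTm n s)
  | .all m τ A => if m = n ∧ τ = σ then .all m τ A else .all m τ (A.substTm n s)
  | .ex m τ A => if m = n ∧ τ = σ then .ex m τ A else .ex m τ (A.substTm n s)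

/-- `s` is free for the variable `(n, σ)` in the classical formula `A`. -/
def CForm.FreeFor {σ : Ty} (s : Tm σ) (n : ℕ) : CForm → Prop
  | .eq _ _ => True
  | .not A => CForm.FreeFor s n A
  | .and A B => CForm.FreeFor s n A ∧ CForm.FreeFor s n B
  | .or A B => CForm.FreeFor s n A ∧ CForm.FreeFor s n B
  | .imp A B => CForm.FreeFor s n A ∧ CForm.FreeFor s n B
  | .all m τ A =>
      ((n, σ) ∉ (A.fvars \ {(m, τ)})) ∨ (((m, τ) ∉ s.fvars) ∧ CForm.FreeFor s n A)
  | .ex m τ A =>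
      ((n, σ) ∉ (A.fvars \ {(m, τ)})) ∨ (((m, τ) ∉ s.fvars) ∧ CForm.FreeFor s n A)

/-- Quantifier-free classical formulas. -/
def CForm.qf : CForm → Prop
  | .eq _ _ => True
  | .not A => A.qf
  | .and A B => A.qf ∧ B.qf
  | .or A B => A.qf ∧ B.qf
  | .imp A B => A.qf ∧ B.qf
  | .all _ _ _ => False
  | .ex _ _ _ => False

/-- Higher-type equality as an abbreviation: `s =_{ρ ⤳ τ} t :≡ ∀x (s x =_τ t x)`. -/
def eqAt : (τ : Ty) → Tm τ → Tm τ → CForm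
  | 𝕆, s, t => .eq s t
  | .arr σ τ, s, t =>
      let n := max s.maxVar t.maxVar
      .all n σ (eqAt τ (s.app (.var n σ)) (t.app (.var n σ)))

/-- `s ≠₀ t`. -/
def neqF (s t : Tm 𝕆) : CForm := .not (.eq s t)
/-- Classical bi-implication. -/
def iffC (A B : CForm) : CForm := (A.imp B).and (B.imp A)

/-- `s <₀ t` expressed as `∃k (s + (k+1) = t)`. -/
def ltF (s t : Tm 𝕆) : CForm :=
  let k := max s.maxVar t.maxVar
  .ex k 𝕆 (.eq ((addT.app s).app (Tm.app Tm.succ (v0 k))) t)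

/-- `s ≤₀ t` expressed as `∃k (s + k = t)`. -/
def leF (s t : Tm 𝕆) : CForm :=
  let k := max s.maxVar t.maxVar
  .ex k 𝕆 (.eq ((addT.app s).app (v0 k)) t)

/-- The axioms of `EPAω`: equality axioms, successor axioms, defining equations for the
projectors, combinators, recursors and λ-abstraction, extensionality and full induction. -/
inductive EPAAx : CForm → Prop
  | eqRefl (n : ℕ) : EPAAx (.eq (v0 n) (v0 n))
  | eqSym (n m : ℕ) :
      EPAAx ((CForm.eq (v0 n) (v0 m)).imp (.eq (v0 m) (v0 n)))
  | eqTrans (n m k : ℕ) :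
      EPAAx (((CForm.eq (v0 n) (v0 m)).and (.eq (v0 m) (v0 k))).imp (.eq (v0 n) (v0 k)))
  | eqSub (A : CForm) (z x y : ℕ)
      (hx : CForm.FreeFor (v0 x) z A) (hy : CForm.FreeFor (v0 y) z A) :
      EPAAx ((CForm.eq (v0 x) (v0 y)).imp
        ((A.substTm z (v0 x)).imp (A.substTm z (v0 y))))
  | succInj (n m : ℕ) :
      EPAAx ((CForm.eq (Tm.app Tm.succ (v0 n)) (Tm.app Tm.succ (v0 m))).imp
        (.eq (v0 n) (v0 m)))
  | succNeZero (n : ℕ) : EPAAx (.not (.eq (Tm.app Tm.succ (v0 n)) .zero))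
  | axK {σ τ : Ty} (a : Tm σ) (b : Tm τ) :
      EPAAx (eqAt σ (((Tm.K σ τ).app a).app b) a)
  | axS {δ ρ τ : Ty} (x : Tm (δ ⤳ ρ ⤳ τ)) (y : Tm (δ ⤳ ρ)) (z : Tm δ) :
      EPAAx (eqAt τ ((((Tm.S δ ρ τ).app x).app y).app z) ((x.app z).app (y.app z)))
  | axR0 {τ : Ty} (y : Tm τ) (z : Tm (𝕆 ⤳ τ ⤳ τ)) :
      EPAAx (eqAt τ ((((Tm.R τ).app y).app z).app .zero) y)
  | axRS {τ : Ty} (y : Tm τ) (z : Tm (𝕆 ⤳ τ ⤳ τ)) (n : Tm 𝕆) :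
      EPAAx (eqAt τ ((((Tm.R τ).app y).app z).app (Tm.app Tm.succ n))
        ((z.app n).app ((((Tm.R τ).app y).app z).app n)))
  | axBeta {σ τ : Ty} (n : ℕ) (t : Tm τ) (s : Tm σ) (h : s.FreeForIn n t) :
      EPAAx (eqAt τ ((Tm.lam n σ t).app s) (t.subst n s))
  | axExt {ρ τ : Ty} (nz nx ny : ℕ) :
      EPAAx ((eqAt ρ (.var nx ρ) (.var ny ρ)).imp
        (eqAt τ ((Tm.var nz (ρ ⤳ τ)).app (.var nx ρ)) ((Tm.var nz (ρ ⤳ τ)).app (.var ny ρ))))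
  | axInd (A : CForm) (n : ℕ)
      (h : CForm.FreeFor (Tm.app Tm.succ (v0 n)) n A) :
      EPAAx (((A.substTm n (Tm.zero)).and
        (.all n 𝕆 (A.imp (A.substTm n (Tm.app Tm.succ (v0 n)))))).imp (.all n 𝕆 A))

/-- `EPAω`'s axioms as a set of formulas. -/
def EPA : Set CForm := fun A => EPAAx A

/-- The quantifier-free axiom of choice `QF-AC⁰⁰`. -/
inductive QFAC : CForm → Prop
  | mk (A : CForm) (x y Y : ℕ) (hqf : A.qf) (hxy : x ≠ y)
      (hY : (Y, Ty1) ∉ A.fvars)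
      (hff : CForm.FreeFor ((Tm.var Y Ty1).app (v0 x)) y A) :
      QFAC ((CForm.all x 𝕆 (.ex y 𝕆 A)).imp
        (.ex Y Ty1 (.all x 𝕆 (A.substTm y ((Tm.var Y Ty1).app (v0 x))))))

/-- `QF-AC⁰⁰` as a set of formulas. -/
def QFA : Set CForm := fun A => QFAC A

/-- Gentzen-style two-sided sequent calculus for classical logic over `Tm`,
with axioms from the set `Ax`. `CProof Ax Γ Δ` means `Γ ⊢ Δ` is derivable. -/
inductive CProof (Ax : Set CForm) : List CForm → List CForm → Prop
  | ax {A} (h : A ∈ Ax) : CProof Ax [] [A]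
  | id (A) : CProof Ax [A] [A]
  | cut {Γ Δ Γ' Δ' A} :
      CProof Ax Γ (A :: Δ) → CProof Ax (A :: Γ') Δ' → CProof Ax (Γ ++ Γ') (Δ ++ Δ')
  | permL {Γ Γ' Δ} : CProof Ax Γ Δ → Γ.Perm Γ' → CProof Ax Γ' Δ
  | permR {Γ Δ Δ'} : CProof Ax Γ Δ → Δ.Perm Δ' → CProof Ax Γ Δ'
  | wkL {Γ Δ} (A) : CProof Ax Γ Δ → CProof Ax (A :: Γ) Δ
  | wkR {Γ Δ} (A) : CProof Ax Γ Δ → CProof Ax Γ (A :: Δ)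
  | conL {Γ Δ A} : CProof Ax (A :: A :: Γ) Δ → CProof Ax (A :: Γ) Δ
  | conR {Γ Δ A} : CProof Ax Γ (A :: A :: Δ) → CProof Ax Γ (A :: Δ)
  | notL {Γ Δ A} : CProof Ax Γ (A :: Δ) → CProof Ax (CForm.not A :: Γ) Δ
  | notR {Γ Δ A} : CProof Ax (A :: Γ) Δ → CProof Ax Γ (CForm.not A :: Δ)
  | andL {Γ Δ A B} : CProof Ax (A :: B :: Γ) Δ → CProof Ax ((CForm.and A B) :: Γ) Δ
  | andR {Γ Δ A B} :
      CProof Ax Γ (A :: Δ) → CProof Ax Γ (B :: Δ) → CProof Ax Γ ((CForm.and A B) :: Δ)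
  | orL {Γ Δ A B} :
      CProof Ax (A :: Γ) Δ → CProof Ax (B :: Γ) Δ → CProof Ax ((CForm.or A B) :: Γ) Δ
  | orR {Γ Δ A B} : CProof Ax Γ (A :: B :: Δ) → CProof Ax Γ ((CForm.or A B) :: Δ)
  | impL {Γ Δ A B} :
      CProof Ax Γ (A :: Δ) → CProof Ax (B :: Γ) Δ → CProof Ax ((CForm.imp A B) :: Γ) Δ
  | impR {Γ Δ A B} : CProof Ax (A :: Γ) (B :: Δ) → CProof Ax Γ ((CForm.imp A B) :: Δ)
  | allL {Γ Δ A n σ} (t : Tm σ) (hff : CForm.FreeFor t n A) :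
      CProof Ax ((A.substTm n t) :: Γ) Δ → CProof Ax ((CForm.all n σ A) :: Γ) Δ
  | allR {Γ Δ A n σ}
      (hfr : ∀ B ∈ Γ, (n, σ) ∉ CForm.fvars B) (hfr' : ∀ B ∈ Δ, (n, σ) ∉ CForm.fvars B) :
      CProof Ax Γ (A :: Δ) → CProof Ax Γ ((CForm.all n σ A) :: Δ)
  | exL {Γ Δ A n σ}
      (hfr : ∀ B ∈ Γ, (n, σ) ∉ CForm.fvars B) (hfr' : ∀ B ∈ Δ, (n, σ) ∉ CForm.fvars B) :
      CProof Ax (A :: Γ) Δ → CProof Ax ((CForm.ex n σ A) :: Γ) Δ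
  | exR {Γ Δ A n σ} (t : Tm σ) (hff : CForm.FreeFor t n A) :
      CProof Ax Γ ((A.substTm n t) :: Δ) → CProof Ax Γ ((CForm.ex n σ A) :: Δ)

/-- Formulas of the linear calculi `ELPAω_lp` / `ELPAω_eq` (in negation normal form,
with dual pairs of atoms). `ph`/`nph` is a placeholder (and its dual). -/
inductive LForm : Type
  | one : LForm
  | zer : LForm
  | top : LForm
  | bot : LForm
  | eq : Tm 𝕆 → Tm 𝕆 → LForm
  | neq : Tm 𝕆 → Tm 𝕆 → LForm
  | lp : (τ : Ty) → Tm τ → LForm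
  | nlp : (τ : Ty) → Tm τ → LForm
  | deq : Tm 𝕆 → Tm 𝕆 → LForm
  | ndeq : Tm 𝕆 → Tm 𝕆 → LForm
  | tag : Tm 𝕆 → LForm
  | ntag : Tm 𝕆 → LForm
  | ph : LForm
  | nph : LForm
  | tensor : LForm → LForm → LForm
  | par : LForm → LForm → LForm
  | oplus : LForm → LForm → LForm
  | withC : LForm → LForm → LForm
  | bang : LForm → LForm
  | quest : LForm → LForm
  | all : ℕ → Ty → LForm → LForm
  | ex : ℕ → Ty → LForm → LForm

/-- Linear negation `A^⊥` (an involution, by De Morgan duality). -/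
def LForm.neg : LForm → LForm
  | .one => .bot
  | .bot => .one
  | .zer => .top
  | .top => .zer
  | .eq s t => .neq s t
  | .neq s t => .eq s t
  | .lp τ t => .nlp τ t
  | .nlp τ t => .lp τ t
  | .deq s t => .ndeq s t
  | .ndeq s t => .deq s t
  | .tag t => .ntag t
  | .ntag t => .tag t
  | .ph => .nph
  | .nph => .ph
  | .tensor A B => .par A.neg B.neg
  | .par A B => .tensor A.neg B.neg
  | .oplus A B => .withC A.neg B.neg
  | .withC A B => .oplus A.neg B.neg
  | .bang A => .quest A.neg
  | .quest A => .bang A.neg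
  | .all n τ A => .ex n τ A.neg
  | .ex n τ A => .all n τ A.neg

/-- Linear implication `A ⊸ B :≡ A^⊥ ⅋ B`. -/
def LForm.limp (A B : LForm) : LForm := .par A.neg B

/-- Free variables of a linear formula. -/
def LForm.fvars : LForm → Set (ℕ × Ty)
  | .eq s t => s.fvars ∪ t.fvars
  | .neq s t => s.fvars ∪ t.fvars
  | .deq s t => s.fvars ∪ t.fvars
  | .ndeq s t => s.fvars ∪ t.fvars
  | .lp _ t => t.fvars
  | .nlp _ t => t.fvars
  | .tag t => t.fvars
  | .ntag t => t.fvars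
  | .tensor A B => A.fvars ∪ B.fvars
  | .par A B => A.fvars ∪ B.fvars
  | .oplus A B => A.fvars ∪ B.fvars
  | .withC A B => A.fvars ∪ B.fvars
  | .bang A => A.fvars
  | .quest A => A.fvars
  | .all n τ A => A.fvars \ {(n, τ)}
  | .ex n τ A => A.fvars \ {(n, τ)}
  | _ => ∅

/-- A strict upper bound for all variable indices occurring in a linear formula. -/
def LForm.maxVar : LForm → ℕ
  | .eq s t => max s.maxVar t.maxVar
  | .neq s t => max s.maxVar t.maxVar
  | .deq s t => max s.maxVar t.maxVar
  | .ndeq s t => max s.maxVar t.maxVar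
  | .lp _ t => t.maxVar
  | .nlp _ t => t.maxVar
  | .tag t => t.maxVar
  | .ntag t => t.maxVar
  | .tensor A B => max A.maxVar B.maxVar
  | .par A B => max A.maxVar B.maxVar
  | .oplus A B => max A.maxVar B.maxVar
  | .withC A B => max A.maxVar B.maxVar
  | .bang A => A.maxVar
  | .quest A => A.maxVar
  | .all n _ A => max (n + 1) A.maxVar
  | .ex n _ A => max (n + 1) A.maxVar
  | _ => 0

/-- Substitution of a term for a variable in a linear formula (naive). -/
def LForm.substTm (A : LForm) (n : ℕ) {σ : Ty} (s : Tm σ) : LForm :=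
  match A with
  | .eq a b => .eq (a.subst n s) (b.subst n s)
  | .neq a b => .neq (a.subst n s) (b.subst n s)
  | .deq a b => .deq (a.subst n s) (b.subst n s)
  | .ndeq a b => .ndeq (a.subst n s) (b.subst n s)
  | .lp τ t => .lp τ (t.subst n s)
  | .nlp τ t => .nlp τ (t.subst n s)
  | .tag t => .tag (t.subst n s)
  | .ntag t => .ntag (t.subst n s)
  | .tensor A B => .tensor (A.substTm n s) (B.substTm n s)
  | .par A B => .par (A.substTm n s) (B.substTm n s)
  | .oplus A B => .oplus (A.substTm n s) (B.substTm n s)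
  | .withC A B => .withC (A.substTm n s) (B.substTm n s)
  | .bang A => .bang (A.substTm n s)
  | .quest A => .quest (A.substTm n s)
  | .all m τ A => if m = n ∧ τ = σ then .all m τ A else .all m τ (A.substTm n s)
  | .ex m τ A => if m = n ∧ τ = σ then .ex m τ A else .ex m τ (A.substTm n s)
  | B => B

/-- `s` is free for the variable `(n, σ)` in the linear formula `A`. -/
def LForm.FreeFor {σ : Ty} (s : Tm σ) (n : ℕ) : LForm → Prop
  | .tensor A B => LForm.FreeFor s n A ∧ LForm.FreeFor s n B
  | .par A B => LForm.FreeFor s n A ∧ LForm.FreeFor s n B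
  | .oplus A B => LForm.FreeFor s n A ∧ LForm.FreeFor s n B
  | .withC A B => LForm.FreeFor s n A ∧ LForm.FreeFor s n B
  | .bang A => LForm.FreeFor s n A
  | .quest A => LForm.FreeFor s n A
  | .all m τ A =>
      ((n, σ) ∉ (A.fvars \ {(m, τ)})) ∨ (((m, τ) ∉ s.fvars) ∧ LForm.FreeFor s n A)
  | .ex m τ A =>
      ((n, σ) ∉ (A.fvars \ {(m, τ)})) ∨ (((m, τ) ∉ s.fvars) ∧ LForm.FreeFor s n A)
  | _ => True

/-- Nonlinear formulas: those containing no `⊕`, `&` and no linear predicate. -/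
def LForm.Nonlinear : LForm → Prop
  | .oplus _ _ => False
  | .withC _ _ => False
  | .lp _ _ => False
  | .nlp _ _ => False
  | .tensor A B => A.Nonlinear ∧ B.Nonlinear
  | .par A B => A.Nonlinear ∧ B.Nonlinear
  | .bang A => A.Nonlinear
  | .quest A => A.Nonlinear
  | .all _ _ A => A.Nonlinear
  | .ex _ _ A => A.Nonlinear
  | _ => True

/-- Formulas containing neither dot-equality nor the tagging predicate. -/
def LForm.NoDotTag : LForm → Prop
  | .deq _ _ => False
  | .ndeq _ _ => False
  | .tag _ => False
  | .ntag _ => False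
  | .tensor A B => A.NoDotTag ∧ B.NoDotTag
  | .par A B => A.NoDotTag ∧ B.NoDotTag
  | .oplus A B => A.NoDotTag ∧ B.NoDotTag
  | .withC A B => A.NoDotTag ∧ B.NoDotTag
  | .bang A => A.NoDotTag
  | .quest A => A.NoDotTag
  | .all _ _ A => A.NoDotTag
  | .ex _ _ A => A.NoDotTag
  | _ => True

/-- The Girard embedding `A ↦ A^L` of classical formulas into linear logic:
`∧ ↦ ⊗`, `∨ ↦ ⅋`, `¬ ↦ (·)^⊥`, `→ ↦ ⊸`. -/
def CForm.emb : CForm → LForm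
  | .eq s t => .eq s t
  | .not A => A.emb.neg
  | .and A B => .tensor A.emb B.emb
  | .or A B => .par A.emb B.emb
  | .imp A B => .par A.emb.neg B.emb
  | .all n τ A => .all n τ A.emb
  | .ex n τ A => .ex n τ A.emb

/-- Higher-type linear equality: `s =_{ρ ⤳ τ} t :≡ ∀x (s x =_τ t x)`. -/
def leqAt : (τ : Ty) → Tm τ → Tm τ → LForm
  | 𝕆, s, t => .eq s t
  | .arr σ τ, s, t =>
      let n := max s.maxVar t.maxVar
      .all n σ (leqAt τ (s.app (.var n σ)) (t.app (.var n σ)))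

/-- Higher-type dot-equality: `s ≐_{ρ ⤳ τ} t :≡ ∀x (s x ≐_τ t x)`. -/
def deqAt : (τ : Ty) → Tm τ → Tm τ → LForm
  | 𝕆, s, t => .deq s t
  | .arr σ τ, s, t =>
      let n := max s.maxVar t.maxVar
      .all n σ (deqAt τ (s.app (.var n σ)) (t.app (.var n σ)))

/-- Left part of the linear axiom of choice `(lAC)`:
`(∀x⁰ ∃y⁰ α x y =₀ 0)^⊥`. -/
def lACleft (a x y : ℕ) : LForm :=
  (LForm.all x 𝕆 (.ex y 𝕆
    (.eq (((Tm.var a Ty2).app (v0 x)).app (v0 y)) .zero))).neg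

/-- Right part of the linear axiom of choice `(lAC)`:
`∃Y¹ (∀x⁰ (α x (Y x) =₀ 0) ⊗ !(lp(α) ⊸ lp(Y)))`. -/
def lACright (a Y x : ℕ) : LForm :=
  .ex Y Ty1 ((LForm.all x 𝕆
      (.eq (((Tm.var a Ty2).app (v0 x)).app ((Tm.var Y Ty1).app (v0 x))) .zero)).tensor
    (.bang ((LForm.lp Ty2 (.var a Ty2)).limp (.lp Ty1 (.var Y Ty1)))))

/-- One-sided sequent calculus for the linear systems. `LProof affine eqc Ax Γ` means
that the sequent `⊢ Γ` is derivable, where: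
* `affine = true` adds unrestricted weakening `(w)` (the affine calculi `EAPAω`),
* `eqc = true` adds the dot-equality/tagging rules of the `_eq` calculi and restricts
  `(!₂)` to nonlinear formulas without `≐`/`□`,
* `Ax` is a set of classical formulas whose Girard embeddings are available as axioms
  (the embedded `EPAω` axioms plus possibly further formulas `Γ^L`). -/
inductive LProof (affine eqc : Bool) (Ax : Set CForm) : List LForm → Prop
  | fromAx {A} (h : A ∈ Ax) : LProof affine eqc Ax [A.emb]
  | id (A : LForm) : LProof affine eqc Ax [A, A.neg]
  | cut {Γ Δ A} :
      LProof affine eqc Ax (A :: Γ) → LProof affine eqc Ax (A.neg :: Δ) →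
      LProof affine eqc Ax (Γ ++ Δ)
  | perm {Γ Γ'} : LProof affine eqc Ax Γ → Γ.Perm Γ' → LProof affine eqc Ax Γ'
  | tensor {Γ Δ A B} :
      LProof affine eqc Ax (A :: Γ) → LProof affine eqc Ax (B :: Δ) →
      LProof affine eqc Ax ((LForm.tensor A B) :: Γ ++ Δ)
  | par {Γ A B} :
      LProof affine eqc Ax (A :: B :: Γ) → LProof affine eqc Ax ((LForm.par A B) :: Γ)
  | one : LProof affine eqc Ax [.one]
  | botR {Γ} : LProof affine eqc Ax Γ → LProof affine eqc Ax (.bot :: Γ)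
  | withR {Γ A B} :
      LProof affine eqc Ax (A :: Γ) → LProof affine eqc Ax (B :: Γ) →
      LProof affine eqc Ax ((LForm.withC A B) :: Γ)
  | top {Γ} : LProof affine eqc Ax (.top :: Γ)
  | oplus1 {Γ A B} : LProof affine eqc Ax (A :: Γ) →
      LProof affine eqc Ax ((LForm.oplus A B) :: Γ)
  | oplus2 {Γ A B} : LProof affine eqc Ax (B :: Γ) →
      LProof affine eqc Ax ((LForm.oplus A B) :: Γ)
  | bangR {Γ A} (h : ∀ B ∈ Γ, ∃ C, B = LForm.quest C) :
      LProof affine eqc Ax (A :: Γ) → LProof affine eqc Ax ((LForm.bang A) :: Γ)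
  | der {Γ A} : LProof affine eqc Ax (A :: Γ) →
      LProof affine eqc Ax ((LForm.quest A) :: Γ)
  | wkq {Γ} (A) : LProof affine eqc Ax Γ → LProof affine eqc Ax ((LForm.quest A) :: Γ)
  | conq {Γ A} :
      LProof affine eqc Ax (LForm.quest A :: LForm.quest A :: Γ) →
      LProof affine eqc Ax (LForm.quest A :: Γ)
  | allR {Γ A n σ} (h : ∀ B ∈ Γ, (n, σ) ∉ LForm.fvars B) :
      LProof affine eqc Ax (A :: Γ) → LProof affine eqc Ax ((LForm.all n σ A) :: Γ)
  | exR {Γ A n σ} (t : Tm σ) (hff : LForm.FreeFor t n A) :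
      LProof affine eqc Ax ((A.substTm n t) :: Γ) →
      LProof affine eqc Ax ((LForm.ex n σ A) :: Γ)
  -- axioms and rules for the linear predicate
  | lpAx {τ} (t : Tm τ) (h : t.Closed) : LProof affine eqc Ax [.lp τ t]
  | bang2 {A} (h : A.Nonlinear) (h2 : eqc = true → A.NoDotTag) :
      LProof affine eqc Ax [A.neg, .bang A]
  | lpCon {Γ τ t} :
      LProof affine eqc Ax (LForm.nlp τ t :: LForm.nlp τ t :: Γ) →
      LProof affine eqc Ax (LForm.nlp τ t :: Γ)
  | lpApp {ρ τ} (t : Tm (ρ ⤳ τ)) (r : Tm ρ) :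
      LProof affine eqc Ax [.nlp (ρ ⤳ τ) t, .nlp ρ r, .lp τ (t.app r)]
  | lAC (a Y x y : ℕ) (hxy : x ≠ y) :
      LProof affine eqc Ax [lACleft a x y, lACright a Y x]
  -- unrestricted weakening for the affine calculi
  | wk {Γ} (A) (h : affine = true) : LProof affine eqc Ax Γ →
      LProof affine eqc Ax (A :: Γ)
  -- rules of the `_eq` calculi
  | dotSucc (n : ℕ) (h : eqc = true) :
      LProof affine eqc Ax [.bang (.ndeq (Tm.app Tm.succ (v0 n)) .zero)]
  | dotEq1 {τ} {s t : Tm τ} (h : eqc = true) :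
      LProof affine eqc Ax [leqAt τ s t] → LProof affine eqc Ax [.bang (deqAt τ s t)]
  | dotEq2 (k : ℕ) (h : eqc = true) :
      LProof affine eqc Ax
        [(LForm.bang (.ndeq (v0 k) .zero)).neg, .bang (.deq (sgT.app (v0 k)) tm1)]
  | dotSub {τ} (x y z : ℕ) (A : LForm) (h : eqc = true)
      (hfx : LForm.FreeFor (Tm.var x τ) z A) (hfy : LForm.FreeFor (Tm.var y τ) z A) :
      LProof affine eqc Ax [(LForm.bang (deqAt τ (.var x τ) (.var y τ))).neg,
        (A.substTm z (Tm.var x τ)).neg, A.substTm z (Tm.var y τ)]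
  | tag0 (h : eqc = true) : LProof affine eqc Ax [.tag (sgT.app .zero)]
  | tagCon {Γ t} (h : eqc = true) :
      LProof affine eqc Ax (LForm.ntag t :: LForm.ntag t :: Γ) →
      LProof affine eqc Ax (LForm.ntag t :: Γ)
  | tagApp (x y : ℕ) (h : eqc = true) :
      LProof affine eqc Ax [.ntag (sgT.app (v0 x)), .ntag (sgT.app (v0 y)),
        .tag (sgT.app ((addT.app (v0 x)).app (v0 y)))]

/-- The linear universal quantifier `∀^lp x A :≡ ∀x (lp(x) ⊸ A)`. -/
def allLp (n : ℕ) (τ : Ty) (A : LForm) : LForm :=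
  .all n τ ((LForm.lp τ (.var n τ)).limp A)

/-- The linear existential quantifier `∃^lp x A :≡ ∃x (lp(x) ⊗ A)`. -/
def exLp (n : ℕ) (τ : Ty) (A : LForm) : LForm :=
  .ex n τ ((LForm.lp τ (.var n τ)).tensor A)

/-- The ε-guarded linear existential quantifier `∃^lp_ε x A :≡ ∃x (lp(x) ⊗ ε =₀ 0 ⊗ A)`. -/
def exLpE (e n : ℕ) (τ : Ty) (A : LForm) : LForm :=
  .ex n τ ((LForm.lp τ (.var n τ)).tensor ((LForm.eq (v0 e) .zero).tensor A))

/-- `halts(t·z) :≡ ∀u⁰ ∃v⁰ (t(⟨u⟩ * z̄v) ≠₀ 0)`. -/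
def haltsF (t z : Tm Ty1) : CForm :=
  let u := max t.maxVar z.maxVar
  let v := u + 1
  .all u 𝕆 (.ex v 𝕆
    (neqF (t.app (((seqCodeT.app z).app (v0 u)).app (v0 v))) .zero))

/-- `wit(t·z, x) :≡ ∀u⁰ ∃v⁰ (t(⟨u⟩ * z̄v) =₀ x(u)+1 ∧ ∀w <₀ v (t(⟨u⟩ * z̄w) =₀ 0))`. -/
def witF (t z x : Tm Ty1) : CForm :=
  let u := max (max t.maxVar z.maxVar) x.maxVar
  let v := u + 1
  let w := u + 2
  .all u 𝕆 (.ex v 𝕆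
    ((CForm.eq (t.app (((seqCodeT.app z).app (v0 u)).app (v0 v)))
        (Tm.app Tm.succ (x.app (v0 u)))).and
     (.all w 𝕆 ((ltF (v0 w) (v0 v)).imp
        (.eq (t.app (((seqCodeT.app z).app (v0 u)).app (v0 w))) .zero)))))

/-- `con_τ(s, t)`: the term `s` of type `comp τ` constructs the term `t` of type `τ`. -/
def conF : (τ : Ty) → Tm τ.comp → Tm τ → CForm
  | 𝕆, s, t =>
      let x := max s.maxVar t.maxVar
      (CForm.ex x 𝕆 (neqF (s.app (v0 x)) .zero)).and
        (.all x 𝕆 ((neqF (s.app (v0 x)) .zero).imp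
          (.eq (s.app (v0 x)) (Tm.app Tm.succ t))))
  | .arr ρ τ, s, t =>
      let n := max s.maxVar t.maxVar
      .all n ρ.comp (.all (n + 1) ρ
        ((conF ρ (.var n ρ.comp) (.var (n + 1) ρ)).imp
          (conF τ (s.app (.var n ρ.comp)) (t.app (.var (n + 1) ρ)))))

/-! ### Dialectica interpretation -/

/-- Iterated function type `arrows [σ₁,…,σₖ] τ = σ₁ ⤳ ⋯ ⤳ σₖ ⤳ τ`. -/
def arrows (args : List Ty) (τ : Ty) : Ty := args.foldr Ty.arr τ

/-- Abstract each type in `l` over the argument types `args`. -/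
def absTys (args : List Ty) (l : List Ty) : List Ty := l.map (arrows args)

/-- Witness and counterexample type tuples of the Dialectica interpretation,
parametrized by the witness type `lpW τ` assigned to the linear predicate `lp_τ`. -/
def wcty (lpW : Ty → Ty) : LForm → List Ty × List Ty
  | .lp τ _ => ([lpW τ], [])
  | .nlp τ _ => ([], [lpW τ])
  | .tensor A B =>
      ((wcty lpW A).1 ++ (wcty lpW B).1,
       absTys (wcty lpW B).1 (wcty lpW A).2 ++ absTys (wcty lpW A).1 (wcty lpW B).2)
  | .par A B =>
      (absTys (wcty lpW B).2 (wcty lpW A).1 ++ absTys (wcty lpW A).2 (wcty lpW B).1,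
       (wcty lpW A).2 ++ (wcty lpW B).2)
  | .oplus A B =>
      ((wcty lpW A).1 ++ ((wcty lpW B).1 ++ [𝕆]), (wcty lpW A).2 ++ (wcty lpW B).2)
  | .withC A B =>
      ((wcty lpW A).1 ++ (wcty lpW B).1, (wcty lpW A).2 ++ ((wcty lpW B).2 ++ [𝕆]))
  | .bang A => ((wcty lpW A).1, [])
  | .quest A => ([], (wcty lpW A).2)
  | .all _ _ A => wcty lpW A
  | .ex _ _ A => wcty lpW A
  | _ => ([], [])

/-- Witness types of `A`. -/
abbrev wty (lpW : Ty → Ty) (A : LForm) : List Ty := (wcty lpW A).1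
/-- Counterexample types of `A`. -/
abbrev cty (lpW : Ty → Ty) (A : LForm) : List Ty := (wcty lpW A).2

/-- Heterogeneous tuples of terms. -/
inductive Tms : List Ty → Type
  | nil : Tms []
  | cons {τ l} : Tm τ → Tms l → Tms (τ :: l)

/-- Left part of a split tuple. -/
def Tms.splitl : {l l' : List Ty} → Tms (l ++ l') → Tms l
  | [], _, _ => .nil
  | _ :: _, _, .cons a u => .cons a (Tms.splitl u)

/-- Right part of a split tuple. -/
def Tms.splitr : {l l' : List Ty} → Tms (l ++ l') → Tms l'
  | [], _, v => v
  | _ :: _, _, .cons _ u => Tms.splitr u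

/-- Head of a nonempty tuple. -/
def Tms.hd : {τ : Ty} → {l : List Ty} → Tms (τ :: l) → Tm τ
  | _, _, .cons a _ => a

/-- Apply a term of iterated function type to a tuple of arguments. -/
def appAll : {args : List Ty} → {τ : Ty} → Tm (arrows args τ) → Tms args → Tm τ
  | [], _, t, _ => t
  | _ :: _, _, t, .cons u us => appAll (t.app u) us

/-- Apply each member of a tuple of functionals to the same argument tuple. -/
def appEach : {l : List Ty} → {args : List Ty} → Tms (absTys args l) → Tms args → Tms l
  | [], _, _, _ => .nil
  | _ :: _, _, .cons f fs, us => .cons (appAll f us) (appEach fs us)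

/-- The tuple of variables with indices `n, n+1, …` and types from `l`. -/
def varTms : (l : List Ty) → ℕ → Tms l
  | [], _ => .nil
  | τ :: l, n => .cons (.var n τ) (varTms l (n + 1))

/-- The tuple of variables with indices `g 0, g 1, …` and types from `l`. -/
def mkVarTms : (l : List Ty) → (ℕ → ℕ) → Tms l
  | [], _ => .nil
  | τ :: l, g => .cons (.var (g 0) τ) (mkVarTms l (fun k => g (k + 1)))

/-- Universal quantifier prefix over fresh variables `n, n+1, …` of types `l`. -/
def allPre : (l : List Ty) → ℕ → LForm → LForm
  | [], _, A => A
  | τ :: l, n, A => .all n τ (allPre l (n + 1) A)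

/-- Existential quantifier prefix over fresh variables `n, n+1, …` of types `l`. -/
def exPre : (l : List Ty) → ℕ → LForm → LForm
  | [], _, A => A
  | τ :: l, n, A => .ex n τ (exPre l (n + 1) A)

/-- Free variables of a tuple of terms. -/
def Tms.fvars : {l : List Ty} → Tms l → Set (ℕ × Ty)
  | _, .nil => ∅
  | _, .cons a u => a.fvars ∪ u.fvars

/-- A strict upper bound for all variable indices occurring in a tuple. -/
def Tms.maxVar : {l : List Ty} → Tms l → ℕ
  | _, .nil => 0
  | _, .cons a u => max a.maxVar u.maxVar

/-- Gödel's Dialectica interpretation `|A|^w_c` for linear logic with linear predicate,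
parametrized by the interpretation `lpI` of the linear predicate
(`|lp_τ(t)|^x :≡ lpI τ t x`). -/
def dia (lpW : Ty → Ty) (lpI : (τ : Ty) → Tm τ → Tm (lpW τ) → LForm) :
    (A : LForm) → Tms (wty lpW A) → Tms (cty lpW A) → LForm
  | .one, _, _ => .one
  | .zer, _, _ => .zer
  | .top, _, _ => .top
  | .bot, _, _ => .bot
  | .eq s t, _, _ => .eq s t
  | .neq s t, _, _ => .neq s t
  | .deq s t, _, _ => .deq s t
  | .ndeq s t, _, _ => .ndeq s t
  | .tag t, _, _ => .tag t
  | .ntag t, _, _ => .ntag t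
  | .ph, _, _ => .ph
  | .nph, _, _ => .nph
  | .lp τ t, w, _ => lpI τ t (Tms.hd w)
  | .nlp τ t, _, c => (lpI τ t (Tms.hd c)).neg
  | .tensor A B, w, c =>
      let x := Tms.splitl (l := wty lpW A) (l' := wty lpW B) w
      let u := Tms.splitr (l := wty lpW A) (l' := wty lpW B) w
      let f := Tms.splitl (l := absTys (wty lpW B) (cty lpW A))
        (l' := absTys (wty lpW A) (cty lpW B)) c
      let g := Tms.splitr (l := absTys (wty lpW B) (cty lpW A))
        (l' := absTys (wty lpW A) (cty lpW B)) c
      (dia lpW lpI A x (appEach f u)).tensor (dia lpW lpI B u (appEach g x))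
  | .par A B, w, c =>
      let f := Tms.splitl (l := absTys (cty lpW B) (wty lpW A))
        (l' := absTys (cty lpW A) (wty lpW B)) w
      let g := Tms.splitr (l := absTys (cty lpW B) (wty lpW A))
        (l' := absTys (cty lpW A) (wty lpW B)) w
      let x := Tms.splitl (l := cty lpW A) (l' := cty lpW B) c
      let u := Tms.splitr (l := cty lpW A) (l' := cty lpW B) c
      (dia lpW lpI A (appEach f u) x).par (dia lpW lpI B (appEach g x) u)
  | .oplus A B, w, c =>
      let x := Tms.splitl (l := wty lpW A) (l' := wty lpW B ++ [𝕆]) w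
      let r := Tms.splitr (l := wty lpW A) (l' := wty lpW B ++ [𝕆]) w
      let u := Tms.splitl (l := wty lpW B) (l' := [𝕆]) r
      let k0 := Tms.hd (Tms.splitr (l := wty lpW B) (l' := [𝕆]) r)
      let y := Tms.splitl (l := cty lpW A) (l' := cty lpW B) c
      let v := Tms.splitr (l := cty lpW A) (l' := cty lpW B) c
      ((LForm.bang (.deq k0 .zero)).tensor (dia lpW lpI A x y)).oplus
        ((LForm.bang (.ndeq k0 .zero)).tensor (dia lpW lpI B u v))
  | .withC A B, w, c =>
      let x := Tms.splitl (l := wty lpW A) (l' := wty lpW B) w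
      let u := Tms.splitr (l := wty lpW A) (l' := wty lpW B) w
      let y := Tms.splitl (l := cty lpW A) (l' := cty lpW B ++ [𝕆]) c
      let r := Tms.splitr (l := cty lpW A) (l' := cty lpW B ++ [𝕆]) c
      let v := Tms.splitl (l := cty lpW B) (l' := [𝕆]) r
      let k0 := Tms.hd (Tms.splitr (l := cty lpW B) (l' := [𝕆]) r)
      ((LForm.bang (.deq k0 .zero)).limp (dia lpW lpI A x y)).withC
        ((LForm.bang (.ndeq k0 .zero)).limp (dia lpW lpI B u v))
  | .bang A, w, _ =>
      let n := max A.maxVar w.maxVar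
      .bang (allPre (cty lpW A) n (dia lpW lpI A w (varTms (cty lpW A) n)))
  | .quest A, _, c =>
      let n := max A.maxVar c.maxVar
      .quest (exPre (wty lpW A) n (dia lpW lpI A (varTms (wty lpW A) n) c))
  | .all m τ A, w, c => .all m τ (dia lpW lpI A w c)
  | .ex m τ A, w, c => .ex m τ (dia lpW lpI A w c)

/-- The tagging interpretation of the linear predicate:
`|lp_τ(t)|^{x⁰} :≡ lp_τ(t) ⊗ □(sg x)`. -/
def lpWTag : Ty → Ty := fun _ => 𝕆
/-- The tagging interpretation of the linear predicate. -/
def lpITag : (τ : Ty) → Tm τ → Tm 𝕆 → LForm :=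
  fun τ t x => (LForm.lp τ t).tensor (.tag (sgT.app x))

/-- The computability interpretation of the linear predicate:
`|lp_τ(t)|^{x^{comp τ}} :≡ (con_τ(x, t))^L`. -/
def lpWCon : Ty → Ty := Ty.comp
/-- The computability interpretation of the linear predicate. -/
def lpICon : (τ : Ty) → Tm τ → Tm τ.comp → LForm :=
  fun τ t x => (conF τ x t).emb

/-! ### Standard model and simple phase semantics -/

/-- Set-theoretic denotation of the finite types (the full standard model). -/
def Ty.den : Ty → Type
  | 𝕆 => ℕ
  | .arr σ τ => σ.den → τ.den

/-- Default element of each type. -/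
def Ty.dflt : (τ : Ty) → τ.den
  | 𝕆 => (0 : ℕ)
  | .arr _ τ => fun _ => τ.dflt

/-- Variable environments for the standard model. -/
def Env : Type := (n : ℕ) → (τ : Ty) → τ.den

/-- The default environment. -/
def Env.default : Env := fun _ τ => τ.dflt

/-- Update an environment at a variable. -/
def Env.upd (e : Env) (n : ℕ) {σ : Ty} (a : σ.den) : Env :=
  fun m ρ => if h : m = n ∧ ρ = σ then (by rw [h.2]; exact a) else e m ρ

/-- Denotation of terms in the standard model. -/
def Tm.den : {τ : Ty} → Tm τ → Env → τ.den
  | _, .var n τ, e => e n τ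
  | _, .zero, _ => (0 : ℕ)
  | _, .succ, _ => Nat.succ
  | _, .K _ _, _ => fun a _ => a
  | _, .S _ _ _, _ => fun x y z => x z (y z)
  | _, .R _, _ => fun y z n => Nat.rec y (fun m ih => z m ih) n
  | _, .lam n σ t, e => fun a => Tm.den t (e.upd n (σ := σ) a)
  | _, .app f a, e => (Tm.den f e) (Tm.den a e)

/-- Variable assignments: every variable of type `τ` is mapped to a closed term of type `τ`
(closedness is a separate hypothesis). -/
def Assg : Type := (n : ℕ) → (τ : Ty) → Tm τ

/-- The environment induced by an assignment. -/
def Assg.env (β : Assg) : Env := fun n τ => (β n τ).den Env.default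

/-- Update an assignment at a variable. -/
def Assg.upd (β : Assg) (n : ℕ) {σ : Ty} (s : Tm σ) : Assg :=
  fun m ρ => if h : m = n ∧ ρ = σ then (by rw [h.2]; exact s) else β m ρ

/-- Numerical value of a term of type `0` under an assignment. -/
def Assg.val (β : Assg) (t : Tm 𝕆) : ℕ := t.den β.env

/-- The phase space `P = {0, 1}` is modelled by `Bool` with multiplication `&&`;
the set of antiphases is `{1} = {true}`.  `pol Q = Q^⊥`. -/
def pol (Q : Set Bool) : Set Bool := {p | ∀ q ∈ Q, (p && q) = true}

/-- Simple phase semantics for `ELPAω_eq` over the phase space `{0,1}`.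
`tagPos` is the fixed choice (`∅` or `{0,1}`) of the semantics of `□(t)` for
positive values of `t`. -/
def sem (tagPos : Set Bool) : LForm → Assg → Set Bool
  | .one, _ => {true}
  | .bot, _ => pol {true}
  | .top, _ => Set.univ
  | .zer, _ => pol Set.univ
  | .eq _ _, _ => {true}
  | .neq _ _, _ => pol {true}
  | .lp _ _, _ => {true}
  | .nlp _ _, _ => pol {true}
  | .ph, _ => {true}
  | .nph, _ => pol {true}
  | .deq s t, β => if β.val s = β.val t then Set.univ else ∅
  | .ndeq s t, β => pol (if β.val s = β.val t then Set.univ else ∅)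
  | .tag t, β => if β.val t = 0 then {true} else tagPos
  | .ntag t, β => pol (if β.val t = 0 then {true} else tagPos)
  | .tensor A B, β => {p | ∃ a ∈ sem tagPos A β, ∃ b ∈ sem tagPos B β, p = (a && b)}
  | .withC A B, β => sem tagPos A β ∪ sem tagPos B β
  | .quest A, β => sem tagPos A β ∪ {true}
  | .all n σ A, β => ⋂ (s : {t : Tm σ // t.Closed}), sem tagPos A (β.upd n s.1)
  | .par A B, β =>
      pol {p | ∃ a ∈ pol (sem tagPos A β), ∃ b ∈ pol (sem tagPos B β), p = (a && b)}
  | .oplus A B, β => pol (pol (sem tagPos A β) ∪ pol (sem tagPos B β))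
  | .bang A, β => pol (pol (sem tagPos A β) ∪ {true})
  | .ex n σ A, β =>
      pol (⋂ (s : {t : Tm σ // t.Closed}), pol (sem tagPos A (β.upd n s.1)))

/-- `0 =₀ 0`. -/
def eq00 : CForm := .eq .zero .zero
/-- `1 =₀ 0`. -/
def eq10 : CForm := .eq tm1 .zero

/-- The collapse of linear formulas to classical formulas:
`1, ⊤, lp, □ ↦ 0=0`; `0, ⊥ ↦ 1=0`; `⊗, & ↦ ∧`; `⅋, ⊕ ↦ ∨`; `≐ ↦ =`;
linear negation `↦ ¬`; the modalities are omitted. -/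
def LForm.collapse : LForm → CForm
  | .one => eq00
  | .top => eq00
  | .lp _ _ => eq00
  | .tag _ => eq00
  | .ph => eq00
  | .zer => eq10
  | .bot => eq10
  | .eq s t => .eq s t
  | .deq s t => .eq s t
  | .neq s t => .not (.eq s t)
  | .ndeq s t => .not (.eq s t)
  | .nlp _ _ => .not eq00
  | .ntag _ => .not eq00
  | .nph => .not eq00
  | .tensor A B => .and A.collapse B.collapse
  | .withC A B => .and A.collapse B.collapse
  | .par A B => .or A.collapse B.collapse
  | .oplus A B => .or A.collapse B.collapse
  | .bang A => A.collapse
  | .quest A => A.collapse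
  | .all n τ A => .all n τ A.collapse
  | .ex n τ A => .ex n τ A.collapse

/-- The placeholder `$` occurs only positively in `A`
(after unraveling all abbreviations and involutions, `A` does not contain `$^⊥`). -/
def LForm.PosPh : LForm → Prop
  | .nph => False
  | .tensor A B => A.PosPh ∧ B.PosPh
  | .par A B => A.PosPh ∧ B.PosPh
  | .oplus A B => A.PosPh ∧ B.PosPh
  | .withC A B => A.PosPh ∧ B.PosPh
  | .bang A => A.PosPh
  | .quest A => A.PosPh
  | .all _ _ A => A.PosPh
  | .ex _ _ A => A.PosPh
  | _ => True

/-- Substitute the formula `P` for the placeholder `$` in `A`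
(and `P^⊥` for `$^⊥`). -/
def LForm.phSubst (A P : LForm) : LForm :=
  match A with
  | .ph => P
  | .nph => P.neg
  | .tensor A B => .tensor (A.phSubst P) (B.phSubst P)
  | .par A B => .par (A.phSubst P) (B.phSubst P)
  | .oplus A B => .oplus (A.phSubst P) (B.phSubst P)
  | .withC A B => .withC (A.phSubst P) (B.phSubst P)
  | .bang A => .bang (A.phSubst P)
  | .quest A => .quest (A.phSubst P)
  | .all n τ A => .all n τ (A.phSubst P)
  | .ex n τ A => .ex n τ (A.phSubst P)
  | B => B


/-! ### Shared material for statements 15–17 -/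

/-- `A_at(x,y,u,v) :≡ (t x y u v =₀ 0)` for the closed characteristic term `t`. -/
def aAt (tch : Tm (Ty1 ⤳ Ty1 ⤳ 𝕆 ⤳ 𝕆 ⤳ 𝕆)) (x y : Tm Ty1) (u v : Tm 𝕆) : CForm :=
  .eq ((((tch.app x).app y).app u).app v) .zero

/-- The code of `⟨u⟩ * z̄v`. -/
def codeAt (z : Tm Ty1) (u v : Tm 𝕆) : Tm 𝕆 := ((seqCodeT.app z).app u).app v

/-- The defining property of the characteristic term `t`:
`∀x∀y∀u∀v (t x y u v =₀ 0 ↔ (x(⟨u⟩ * ȳv) ≠₀ 0 ∧ ∀w <₀ v (x(⟨u⟩ * ȳw) =₀ 0)))`. -/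
def chSpec (tch : Tm (Ty1 ⤳ Ty1 ⤳ 𝕆 ⤳ 𝕆 ⤳ 𝕆)) : CForm :=
  .all 0 Ty1 (.all 1 Ty1 (.all 2 𝕆 (.all 3 𝕆
    (iffC (aAt tch (.var 0 Ty1) (.var 1 Ty1) (v0 2) (v0 3))
      ((neqF ((Tm.var 0 Ty1).app (codeAt (.var 1 Ty1) (v0 2) (v0 3))) .zero).and
        (.all 4 𝕆 ((ltF (v0 4) (v0 3)).imp
          (.eq ((Tm.var 0 Ty1).app (codeAt (.var 1 Ty1) (v0 2) (v0 4))) .zero))))))))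

/-! ### Auxiliary structural lemmas -/

theorem LForm.neg_neg (A : LForm) : A.neg.neg = A := by
  induction A <;> simp [LForm.neg, *]

theorem LForm.nonlinear_neg {A : LForm} (h : A.Nonlinear) : A.neg.Nonlinear := by
  induction A <;> simp_all [LForm.Nonlinear, LForm.neg]

theorem CForm.emb_nonlinear (A : CForm) : A.emb.Nonlinear := by
  induction A with
  | eq s t => trivial
  | not A ih => exact LForm.nonlinear_neg ih
  | and A B ihA ihB => exact ⟨ihA, ihB⟩
  | or A B ihA ihB => exact ⟨ihA, ihB⟩
  | imp A B ihA ihB => exact ⟨LForm.nonlinear_neg ihA, ihB⟩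
  | all n τ A ih => exact ih
  | ex n τ A ih => exact ih

theorem LForm.fvars_neg (A : LForm) : A.neg.fvars = A.fvars := by
  induction A <;> simp_all [LForm.fvars, LForm.neg]

theorem CForm.fvars_emb (A : CForm) : A.emb.fvars = A.fvars := by
  induction A <;> simp_all [CForm.fvars, CForm.emb, LForm.fvars, LForm.fvars_neg]

theorem LForm.neg_substTm (A : LForm) (n : ℕ) {σ : Ty} (s : Tm σ) :
    (A.substTm n s).neg = A.neg.substTm n s := by
  induction A <;> simp_all [LForm.substTm, LForm.neg]
  case all m τ B ih =>
    by_cases h : m = n ∧ τ = σ <;> simp [h, LForm.substTm, LForm.neg, ih]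
  case ex m τ B ih =>
    by_cases h : m = n ∧ τ = σ <;> simp [h, LForm.substTm, LForm.neg, ih]

theorem CForm.emb_substTm (A : CForm) (n : ℕ) {σ : Ty} (s : Tm σ) :
    (A.substTm n s).emb = A.emb.substTm n s := by
  induction A <;> simp_all [CForm.substTm, CForm.emb, LForm.substTm, LForm.neg_substTm]
  case all m τ B ih =>
    by_cases h : m = n ∧ τ = σ <;> simp [h, CForm.substTm, CForm.emb, LForm.substTm, ih]
  case ex m τ B ih =>
    by_cases h : m = n ∧ τ = σ <;> simp [h, CForm.substTm, CForm.emb, LForm.substTm, ih]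

theorem LForm.freeFor_neg {σ : Ty} {s : Tm σ} {n : ℕ} {A : LForm}
    (h : LForm.FreeFor s n A) : LForm.FreeFor s n A.neg := by
  induction A <;> simp_all [LForm.FreeFor, LForm.neg, LForm.fvars_neg] <;> tauto

theorem CForm.freeFor_emb {σ : Ty} {s : Tm σ} {n : ℕ} {A : CForm}
    (h : CForm.FreeFor s n A) : LForm.FreeFor s n A.emb := by
  induction A with
  | eq a b => trivial
  | not B ih => exact LForm.freeFor_neg (ih h)
  | and B C ihB ihC => exact ⟨ihB h.1, ihC h.2⟩
  | or B C ihB ihC => exact ⟨ihB h.1, ihC h.2⟩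
  | imp B C ihB ihC => exact ⟨LForm.freeFor_neg (ihB h.1), ihC h.2⟩
  | all m τ B ih =>
      rcases h with h | h
      · left; rwa [CForm.fvars_emb]
      · exact Or.inr ⟨h.1, ih h.2⟩
  | ex m τ B ih =>
      rcases h with h | h
      · left; rwa [CForm.fvars_emb]
      · exact Or.inr ⟨h.1, ih h.2⟩

/-! ### Derived rules for `LProof` (non-affine, non-eq) -/

section LDerived

variable {Ax : Set CForm}

/-- `⊢ !(A^⊥), A` for nonlinear `A`. -/
theorem LProof.bangNegSelf {A : LForm} (h : A.Nonlinear) :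
    LProof false false Ax [.bang A.neg, A] := by
  have h2 : LProof false false Ax [A.neg.neg, .bang A.neg] :=
    LProof.bang2 (LForm.nonlinear_neg h) (by simp)
  rw [LForm.neg_neg] at h2
  exact h2.perm (List.Perm.swap _ _ _)

/-- Weakening for nonlinear formulas. -/
theorem LProof.wkNL {Γ : List LForm} {A : LForm} (h : A.Nonlinear)
    (p : LProof false false Ax Γ) : LProof false false Ax (A :: Γ) := by
  have p1 : LProof false false Ax (LForm.quest A :: Γ) := p.wkq A
  have p2 : LProof false false Ax ((LForm.quest A).neg :: [A]) := by
    show LProof false false Ax (LForm.bang A.neg :: [A])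
    exact LProof.bangNegSelf h
  have := p1.cut p2
  exact this.perm (List.perm_append_comm.trans (by simp))

/-- Contraction for nonlinear formulas. -/
theorem LProof.conNL {Γ : List LForm} {A : LForm} (h : A.Nonlinear)
    (p : LProof false false Ax (A :: A :: Γ)) : LProof false false Ax (A :: Γ) := by
  have p1 : LProof false false Ax (LForm.quest A :: A :: Γ) := p.der
  have p2 : LProof false false Ax (A :: LForm.quest A :: Γ) :=
    p1.perm (List.Perm.swap _ _ _)
  have p3 : LProof false false Ax (LForm.quest A :: Γ) := p2.der.conq
  have p4 : LProof false false Ax ((LForm.quest A).neg :: [A]) := LProof.bangNegSelf h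
  have := p3.cut p4
  exact this.perm (List.perm_append_comm.trans (by simp))

/-- Contraction of a duplicated nonlinear context. -/
theorem LProof.conCtx : ∀ (Δ Γ : List LForm), (∀ C ∈ Δ, C.Nonlinear) →
    LProof false false Ax (Δ ++ Δ ++ Γ) → LProof false false Ax (Δ ++ Γ)
  | [], _, _, p => p
  | C :: Δ, Γ, hNL, p => by
      have hC : C.Nonlinear := hNL C (List.mem_cons_self)
      have p1 : LProof false false Ax (C :: C :: (Δ ++ Δ ++ Γ)) := by
        refine p.perm ?_
        have h1 : (C :: Δ) ++ (C :: Δ) ++ Γ = C :: (Δ ++ C :: (Δ ++ Γ)) := by simp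
        have h2 : (Δ ++ C :: (Δ ++ Γ)).Perm (C :: (Δ ++ (Δ ++ Γ))) := List.perm_middle
        rw [h1]
        refine (h2.cons C).trans ?_
        simp [List.append_assoc]
      have p3 : LProof false false Ax (Δ ++ Δ ++ (C :: Γ)) := by
        refine (p1.conNL hC).perm ?_
        exact (List.perm_middle (a := C) (l₁ := Δ ++ Δ) (l₂ := Γ)).symm
      have p4 := LProof.conCtx Δ (C :: Γ) (fun C h => hNL C (List.mem_cons_of_mem _ h)) p3
      refine p4.perm ?_
      exact (List.perm_middle (a := C) (l₁ := Δ) (l₂ := Γ))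

end LDerived

/-! ### The Girard embedding of classical proofs -/

/-- Map `Γ ⊢ Δ` to the one-sided `⊢ (Γ^L)^⊥, Δ^L`. -/
def embCtx (Γ Δ : List CForm) : List LForm :=
  Γ.map (fun A => A.emb.neg) ++ Δ.map CForm.emb

theorem embCtx_nonlinear (Γ Δ : List CForm) : ∀ C ∈ embCtx Γ Δ, C.Nonlinear := by
  intro C hC
  rcases List.mem_append.1 hC with h | h <;> rcases List.mem_map.1 h with ⟨B, _, rfl⟩
  · exact LForm.nonlinear_neg (CForm.emb_nonlinear B)
  · exact CForm.emb_nonlinear B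

theorem embCtx_left (A : CForm) (Γ Δ : List CForm) :
    embCtx (A :: Γ) Δ = A.emb.neg :: embCtx Γ Δ := rfl

theorem embCtx_right_perm (A : CForm) (Γ Δ : List CForm) :
    (embCtx Γ (A :: Δ)).Perm (A.emb :: embCtx Γ Δ) := by
  simpa [embCtx] using (List.perm_middle (a := A.emb)
    (l₁ := Γ.map (fun A => A.emb.neg)) (l₂ := Δ.map CForm.emb))

theorem permSwap4 {α : Type*} (a b c d : List α) :
    ((a ++ b) ++ (c ++ d)).Perm ((a ++ c) ++ (b ++ d)) := by
  simp only [List.append_assoc]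
  refine List.Perm.append_left a ?_
  rw [← List.append_assoc, ← List.append_assoc]
  exact List.perm_append_comm.append_right d

theorem LProof.conCtxHead {Ax : Set CForm} {E : List LForm} {D : LForm}
    (hNL : ∀ C ∈ E, C.Nonlinear)
    (p : LProof false false Ax (D :: (E ++ E))) : LProof false false Ax (D :: E) := by
  have p1 : LProof false false Ax ((E ++ E) ++ [D]) := by
    refine p.perm ?_
    simpa using (List.perm_middle (a := D) (l₁ := E ++ E) (l₂ := ([] : List LForm))).symm
  have p2 := LProof.conCtx E [D] hNL p1
  refine p2.perm ?_
  simpa using (List.perm_middle (a := D) (l₁ := E) (l₂ := ([] : List LForm)))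

theorem embCtx_fvars {Γ Δ : List CForm} {n : ℕ} {σ : Ty}
    (hfr : ∀ B ∈ Γ, (n, σ) ∉ CForm.fvars B) (hfr' : ∀ B ∈ Δ, (n, σ) ∉ CForm.fvars B) :
    ∀ C ∈ embCtx Γ Δ, (n, σ) ∉ LForm.fvars C := by
  intro C hC
  rcases List.mem_append.1 hC with h | h <;> rcases List.mem_map.1 h with ⟨B, hB, rfl⟩
  · rw [LForm.fvars_neg, CForm.fvars_emb]; exact hfr B hB
  · rw [CForm.fvars_emb]; exact hfr' B hB

theorem CProof.toLinear {Ax : Set CForm} {Γ Δ : List CForm}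
    (h : CProof Ax Γ Δ) : LProof false false Ax (embCtx Γ Δ) := by
  induction h with
  | ax h => exact LProof.fromAx h
  | id A =>
      exact (LProof.id A.emb).perm (List.Perm.swap _ _ _)
  | @cut Γ Δ Γ' Δ' A _ _ ih1 ih2 =>
      have p1 : LProof false false Ax (A.emb :: (embCtx Γ Δ)) :=
        ih1.perm (embCtx_right_perm A Γ Δ)
      have p2 : LProof false false Ax (A.emb.neg :: (embCtx Γ' Δ')) := ih2
      have p3 := p1.cut p2
      refine p3.perm ?_
      simp only [embCtx, List.map_append]
      exact permSwap4 _ _ _ _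
  | permL h hp ih => exact ih.perm ((hp.map _).append (List.Perm.refl _))
  | permR h hp ih => exact ih.perm ((List.Perm.refl _).append (hp.map _))
  | @wkL Γ Δ A _ ih => exact ih.wkNL (LForm.nonlinear_neg (CForm.emb_nonlinear A))
  | @wkR Γ Δ A _ ih =>
      exact ((ih.wkNL (CForm.emb_nonlinear A)).perm (embCtx_right_perm A Γ Δ).symm)
  | @conL Γ Δ A _ ih => exact ih.conNL (LForm.nonlinear_neg (CForm.emb_nonlinear A))
  | @conR Γ Δ A _ ih =>
      have p1 : LProof false false Ax (A.emb :: A.emb :: embCtx Γ Δ) :=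
        ih.perm ((embCtx_right_perm A Γ (A :: Δ)).trans
          ((embCtx_right_perm A Γ Δ).cons _))
      exact (p1.conNL (CForm.emb_nonlinear A)).perm (embCtx_right_perm A Γ Δ).symm
  | @notL Γ Δ A _ ih =>
      have p1 : LProof false false Ax (A.emb :: embCtx Γ Δ) :=
        ih.perm (embCtx_right_perm A Γ Δ)
      show LProof false false Ax ((CForm.not A).emb.neg :: embCtx Γ Δ)
      rw [show (CForm.not A).emb.neg = A.emb from by simp [CForm.emb, LForm.neg_neg]]
      exact p1
  | @notR Γ Δ A _ ih =>
      exact (ih.perm (embCtx_right_perm (CForm.not A) Γ Δ).symm)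
  | @andL Γ Δ A B _ ih => exact ih.par
  | @andR Γ Δ A B _ _ ih1 ih2 =>
      have p1 := ih1.perm (embCtx_right_perm A Γ Δ)
      have p2 := ih2.perm (embCtx_right_perm B Γ Δ)
      have p3 := (p1.tensor p2).conCtxHead (embCtx_nonlinear Γ Δ)
      exact p3.perm (embCtx_right_perm (A.and B) Γ Δ).symm
  | @orL Γ Δ A B _ _ ih1 ih2 =>
      exact (ih1.tensor ih2).conCtxHead (embCtx_nonlinear Γ Δ)
  | @orR Γ Δ A B _ ih =>
      have p1 : LProof false false Ax (A.emb :: B.emb :: embCtx Γ Δ) :=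
        ih.perm ((embCtx_right_perm A Γ (B :: Δ)).trans
          ((embCtx_right_perm B Γ Δ).cons _))
      exact p1.par.perm (embCtx_right_perm (A.or B) Γ Δ).symm
  | @impL Γ Δ A B _ _ ih1 ih2 =>
      have p1 := ih1.perm (embCtx_right_perm A Γ Δ)
      have p3 := (p1.tensor ih2).conCtxHead (embCtx_nonlinear Γ Δ)
      show LProof false false Ax ((CForm.imp A B).emb.neg :: embCtx Γ Δ)
      rw [show (CForm.imp A B).emb.neg = LForm.tensor A.emb B.emb.neg from by
        simp [CForm.emb, LForm.neg, LForm.neg_neg]]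
      exact p3
  | @impR Γ Δ A B _ ih =>
      have p1 : LProof false false Ax (A.emb.neg :: B.emb :: embCtx Γ Δ) :=
        ih.perm ((embCtx_right_perm B Γ Δ).cons _)
      exact p1.par.perm (embCtx_right_perm (A.imp B) Γ Δ).symm
  | @allL Γ Δ A n σ t hff _ ih =>
      have p1 : LProof false false Ax
          ((A.emb.neg.substTm n t) :: embCtx Γ Δ) := by
        have := ih
        rw [embCtx_left, CForm.emb_substTm, LForm.neg_substTm] at this
        exact this
      exact p1.exR t (LForm.freeFor_neg (CForm.freeFor_emb hff))
  | @allR Γ Δ A n σ hfr hfr' _ ih =>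
      have p1 := ih.perm (embCtx_right_perm A Γ Δ)
      have p2 := p1.allR (embCtx_fvars hfr hfr')
      exact p2.perm (embCtx_right_perm (CForm.all n σ A) Γ Δ).symm
  | @exL Γ Δ A n σ hfr hfr' _ ih =>
      exact ih.allR (embCtx_fvars hfr hfr')
  | @exR Γ Δ A n σ t hff _ ih =>
      have p1 : LProof false false Ax
          ((A.emb.substTm n t) :: embCtx Γ Δ) := by
        have := ih.perm (embCtx_right_perm (A.substTm n t) Γ Δ)
        rw [CForm.emb_substTm] at this
        exact this
      exact (p1.exR t (CForm.freeFor_emb hff)).perm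
        (embCtx_right_perm (CForm.ex n σ A) Γ Δ).symm

/-! ### Substitution meta-lemmas -/

theorem Tm.subst_var_same (n : ℕ) {σ : Ty} (s : Tm σ) :
    (Tm.var n σ).subst n s = s := by
  show (if h : n = n ∧ σ = σ then _ else _) = s
  rw [dif_pos ⟨rfl, rfl⟩]
  rfl

theorem Tm.subst_self : ∀ {τ : Ty} (t : Tm τ) (n : ℕ) (σ : Ty),
    t.subst n (Tm.var n σ) = t
  | _, .var m ρ, n, σ => by
      show (if h : m = n ∧ ρ = σ then _ else _) = _
      split
      · next h =>
          obtain ⟨h1, h2⟩ := h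
          subst h1; subst h2
          rfl
      · rfl
  | _, .zero, _, _ => rfl
  | _, .succ, _, _ => rfl
  | _, .K _ _, _, _ => rfl
  | _, .S _ _ _, _, _ => rfl
  | _, .R _, _, _ => rfl
  | _, .lam m ρ t, n, σ => by
      show (if m = n ∧ ρ = σ then Tm.lam m ρ t else Tm.lam m ρ (t.subst n (.var n σ))) = _
      split
      · rfl
      · rw [Tm.subst_self t n σ]
  | _, .app f a, n, σ => by
      show Tm.app (f.subst n (.var n σ)) (a.subst n (.var n σ)) = _
      rw [Tm.subst_self f n σ, Tm.subst_self a n σ]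

theorem CForm.substTm_self (A : CForm) (n : ℕ) (σ : Ty) :
    A.substTm n (Tm.var n σ) = A := by
  induction A <;> simp_all [CForm.substTm, Tm.subst_self] <;> split <;> simp_all

theorem Tm.subst_eq_of_not_fvar : ∀ {τ : Ty} (t : Tm τ) {n : ℕ} {σ : Ty} (s : Tm σ),
    (n, σ) ∉ t.fvars → t.subst n s = t
  | _, .var m ρ, n, σ, s, h => by
      show (if h : m = n ∧ ρ = σ then _ else _) = _
      rw [dif_neg]
      rintro ⟨rfl, rfl⟩
      exact h rfl
  | _, .zero, _, _, _, _ => rfl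
  | _, .succ, _, _, _, _ => rfl
  | _, .K _ _, _, _, _, _ => rfl
  | _, .S _ _ _, _, _, _, _ => rfl
  | _, .R _, _, _, _, _ => rfl
  | _, .lam m ρ t, n, σ, s, h => by
      show (if m = n ∧ ρ = σ then Tm.lam m ρ t else Tm.lam m ρ (t.subst n s)) = _
      split
      · rfl
      · next hne =>
          rw [Tm.subst_eq_of_not_fvar t s ?_]
          intro hmem
          refine h ?_
          simp only [Tm.fvars, Set.mem_diff, Set.mem_singleton_iff]
          exact ⟨hmem, fun he => hne (by injection he with h1 h2; exact ⟨h1.symm, h2.symm⟩)⟩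
  | _, .app f a, n, σ, s, h => by
      show Tm.app (f.subst n s) (a.subst n s) = _
      have h' : (n, σ) ∉ f.fvars ∧ (n, σ) ∉ a.fvars := by
        constructor <;> intro hm <;> exact h (by
          simp only [Tm.fvars, Set.mem_union]; tauto)
      rw [Tm.subst_eq_of_not_fvar f s h'.1, Tm.subst_eq_of_not_fvar a s h'.2]

theorem CForm.substTm_eq_of_not_fvar : ∀ (A : CForm) {n : ℕ} {σ : Ty} (s : Tm σ),
    (n, σ) ∉ A.fvars → A.substTm n s = A := by
  intro A
  induction A with
  | eq a b =>
      intro n σ s h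
      simp only [CForm.fvars, Set.mem_union] at h
      push_neg at h
      simp [CForm.substTm, Tm.subst_eq_of_not_fvar a s h.1, Tm.subst_eq_of_not_fvar b s h.2]
  | not B ih => intro n σ s h; simp [CForm.substTm, ih s h]
  | and B C ihB ihC =>
      intro n σ s h
      simp only [CForm.fvars, Set.mem_union] at h; push_neg at h
      simp [CForm.substTm, ihB s h.1, ihC s h.2]
  | or B C ihB ihC =>
      intro n σ s h
      simp only [CForm.fvars, Set.mem_union] at h; push_neg at h
      simp [CForm.substTm, ihB s h.1, ihC s h.2]
  | imp B C ihB ihC =>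
      intro n σ s h
      simp only [CForm.fvars, Set.mem_union] at h; push_neg at h
      simp [CForm.substTm, ihB s h.1, ihC s h.2]
  | all m τ B ih =>
      intro n σ s h
      simp only [CForm.substTm]
      split
      · rfl
      · next hne =>
          rw [ih s ?_]
          intro hmem
          refine h ?_
          simp only [CForm.fvars, Set.mem_diff, Set.mem_singleton_iff]
          exact ⟨hmem, fun he => hne (by injection he with h1 h2; exact ⟨h1.symm, h2.symm⟩)⟩
  | ex m τ B ih =>
      intro n σ s h
      simp only [CForm.substTm]
      split
      · rfl
      · next hne =>
          rw [ih s ?_]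
          intro hmem
          refine h ?_
          simp only [CForm.fvars, Set.mem_diff, Set.mem_singleton_iff]
          exact ⟨hmem, fun he => hne (by injection he with h1 h2; exact ⟨h1.symm, h2.symm⟩)⟩

theorem CForm.qf_substTm {A : CForm} (h : A.qf) (n : ℕ) {σ : Ty} (s : Tm σ) :
    (A.substTm n s).qf := by
  induction A <;> simp_all [CForm.qf, CForm.substTm]

theorem CForm.freeFor_of_qf {A : CForm} (h : A.qf) {σ : Ty} (s : Tm σ) (n : ℕ) :
    CForm.FreeFor s n A := by
  induction A <;> simp_all [CForm.qf, CForm.FreeFor]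

/-! ### Derived rules for `CProof` -/

namespace CProof

variable {Ax : Set CForm} {Γ Δ : List CForm} {A B : CForm}

theorem wkLs (L : List CForm) (h : CProof Ax Γ Δ) : CProof Ax (L ++ Γ) Δ := by
  induction L with
  | nil => exact h
  | cons C L ih => exact ih.wkL C

theorem wkRs (L : List CForm) (h : CProof Ax Γ Δ) : CProof Ax Γ (L ++ Δ) := by
  induction L with
  | nil => exact h
  | cons C L ih => exact ih.wkR C

theorem ofMem (A : CForm) (hΓ : A ∈ Γ) (hΔ : A ∈ Δ) : CProof Ax Γ Δ := by
  obtain ⟨s, t, rfl⟩ := List.append_of_mem hΓ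
  obtain ⟨u, v, rfl⟩ := List.append_of_mem hΔ
  have p0 : CProof Ax [A] [A] := CProof.id A
  have p1 : CProof Ax ((s ++ t) ++ [A]) ((u ++ v) ++ [A]) :=
    (p0.wkLs (s ++ t)).wkRs (u ++ v)
  refine (p1.permL ?_).permR ?_
  · refine List.Perm.trans ?_ (List.perm_middle (a := A) (l₁ := s) (l₂ := t)).symm
    simpa using (List.perm_middle (a := A) (l₁ := s ++ t) (l₂ := ([] : List CForm)))
  · refine List.Perm.trans ?_ (List.perm_middle (a := A) (l₁ := u) (l₂ := v)).symm
    simpa using (List.perm_middle (a := A) (l₁ := u ++ v) (l₂ := ([] : List CForm)))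

theorem cutE (h1 : CProof Ax [] [A]) (h2 : CProof Ax (A :: Γ) Δ) : CProof Ax Γ Δ := by
  have := CProof.cut (Γ := []) (Δ := []) (Γ' := Γ) (Δ' := Δ) h1 h2
  simpa using this

/-- Contract a duplicated left context. -/
theorem conDupL : ∀ (L : List CForm) {Γ : List CForm},
    CProof Ax (L ++ L ++ Γ) Δ → CProof Ax (L ++ Γ) Δ
  | [], _, p => p
  | C :: L, Γ, p => by
      have p1 : CProof Ax (C :: C :: (L ++ L ++ Γ)) Δ := by
        refine p.permL ?_
        have h1 : (C :: L) ++ (C :: L) ++ Γ = C :: (L ++ C :: (L ++ Γ)) := by simp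
        have h2 : (L ++ C :: (L ++ Γ)).Perm (C :: (L ++ (L ++ Γ))) := List.perm_middle
        rw [h1]
        refine (h2.cons C).trans ?_
        simp [List.append_assoc]
      have p2 : CProof Ax (L ++ L ++ (C :: Γ)) Δ := by
        refine (p1.conL).permL ?_
        exact (List.perm_middle (a := C) (l₁ := L ++ L) (l₂ := Γ)).symm
      have p3 := conDupL L p2
      exact p3.permL (List.perm_middle (a := C) (l₁ := L) (l₂ := Γ))

/-- Contract a duplicated right context. -/
theorem conDupR : ∀ (L : List CForm) {Δ : List CForm},
    CProof Ax Γ (L ++ L ++ Δ) → CProof Ax Γ (L ++ Δ)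
  | [], _, p => p
  | C :: L, Δ, p => by
      have p1 : CProof Ax Γ (C :: C :: (L ++ L ++ Δ)) := by
        refine p.permR ?_
        have h1 : (C :: L) ++ (C :: L) ++ Δ = C :: (L ++ C :: (L ++ Δ)) := by simp
        have h2 : (L ++ C :: (L ++ Δ)).Perm (C :: (L ++ (L ++ Δ))) := List.perm_middle
        rw [h1]
        refine (h2.cons C).trans ?_
        simp [List.append_assoc]
      have p2 : CProof Ax Γ (L ++ L ++ (C :: Δ)) := by
        refine (p1.conR).permR ?_
        exact (List.perm_middle (a := C) (l₁ := L ++ L) (l₂ := Δ)).symm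
      have p3 := conDupR L p2
      exact p3.permR (List.perm_middle (a := C) (l₁ := L) (l₂ := Δ))

/-- Cut with fully shared contexts. -/
theorem cutF (h1 : CProof Ax Γ (A :: Δ)) (h2 : CProof Ax (A :: Γ) Δ) :
    CProof Ax Γ Δ := by
  have p := CProof.cut h1 h2
  have p' : CProof Ax (Γ ++ Γ ++ []) (Δ ++ Δ ++ []) := by simpa using p
  have := conDupR Δ (conDupL Γ p')
  simpa using this

/-- Generalize the (sole) formula of a theorem. -/
theorem genAll (n : ℕ) (σ : Ty) (h : CProof Ax [] [A]) :
    CProof Ax [] [CForm.all n σ A] :=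
  h.allR (by simp) (by simp)

/-- Instantiate a universal theorem. -/
theorem instAll {n : ℕ} {σ : Ty} (h : CProof Ax [] [CForm.all n σ A]) (t : Tm σ)
    (hff : CForm.FreeFor t n A) : CProof Ax [] [A.substTm n t] :=
  h.cutE (CProof.allL t hff (CProof.id _))

/-- Modus ponens from a proven implication. -/
theorem mpI (h : CProof Ax [] [A.imp B]) (h1 : CProof Ax Γ (A :: Δ))
    (h2 : CProof Ax (B :: Γ) Δ) : CProof Ax Γ Δ :=
  h.cutE (CProof.impL h1 h2)

end CProof

/-! ### Equality toolkit -/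

section EqToolkit

open CProof

theorem EPA.mem {A : CForm} (h : EPAAx A) : A ∈ EPA := h

theorem refl_t (a : Tm 𝕆) : CProof EPA [] [CForm.eq a a] := by
  have base : CProof EPA [] [CForm.eq (v0 20) (v0 20)] := CProof.ax (EPA.mem (EPAAx.eqRefl 20))
  have h := (base.genAll 20 𝕆).instAll a trivial
  have hc : (CForm.eq (v0 20) (v0 20)).substTm 20 a = CForm.eq a a := by
    simp [CForm.substTm, Tm.subst_var_same]
  rwa [hc] at h

theorem sym_t (a b : Tm 𝕆)
    (hc : (((CForm.eq (v0 20) (v0 21)).imp (CForm.eq (v0 21) (v0 20))).substTm 21 b).substTm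
        20 a = (CForm.eq a b).imp (CForm.eq b a)) :
    CProof EPA [CForm.eq a b] [CForm.eq b a] := by
  have base : CProof EPA [] [(CForm.eq (v0 20) (v0 21)).imp (CForm.eq (v0 21) (v0 20))] :=
    CProof.ax (EPA.mem (EPAAx.eqSym 20 21))
  have h1 := (base.genAll 21 𝕆).instAll b
    (CForm.freeFor_of_qf (by exact ⟨trivial, trivial⟩) b 21)
  have h2 := (h1.genAll 20 𝕆).instAll a (by
    exact CForm.freeFor_of_qf (CForm.qf_substTm (by exact ⟨trivial, trivial⟩) 21 b) a 20)
  rw [hc] at h2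
  exact h2.mpI (ofMem (CForm.eq a b) (by simp) (by simp))
    (ofMem (CForm.eq b a) (by simp) (by simp))

theorem trans_t (a b c : Tm 𝕆)
    (hc : (((((CForm.eq (v0 20) (v0 21)).and (CForm.eq (v0 21) (v0 22))).imp
          (CForm.eq (v0 20) (v0 22))).substTm 22 c).substTm 21 b).substTm 20 a
        = ((CForm.eq a b).and (CForm.eq b c)).imp (CForm.eq a c)) :
    CProof EPA [CForm.eq a b, CForm.eq b c] [CForm.eq a c] := by
  have base := CProof.ax (EPA.mem (EPAAx.eqTrans 20 21 22))
  have h1 := (base.genAll 22 𝕆).instAll c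
    (CForm.freeFor_of_qf (by exact ⟨⟨trivial, trivial⟩, trivial⟩) c 22)
  have h2 := (h1.genAll 21 𝕆).instAll b
    (CForm.freeFor_of_qf (CForm.qf_substTm (by exact ⟨⟨trivial, trivial⟩, trivial⟩) 22 c) b 21)
  have h3 := (h2.genAll 20 𝕆).instAll a
    (CForm.freeFor_of_qf (CForm.qf_substTm (CForm.qf_substTm
      (by exact ⟨⟨trivial, trivial⟩, trivial⟩) 22 c) 21 b) a 20)
  rw [hc] at h3
  refine h3.mpI ?_ (ofMem (CForm.eq a c) (by simp) (by simp))
  exact CProof.andR (ofMem (CForm.eq a b) (by simp) (by simp))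
    (ofMem (CForm.eq b c) (by simp) (by simp))

theorem succinj_t (a b : Tm 𝕆)
    (hc : (((CForm.eq (Tm.app Tm.succ (v0 20)) (Tm.app Tm.succ (v0 21))).imp
          (CForm.eq (v0 20) (v0 21))).substTm 21 b).substTm 20 a
        = (CForm.eq (Tm.app Tm.succ a) (Tm.app Tm.succ b)).imp (CForm.eq a b)) :
    CProof EPA [CForm.eq (Tm.app Tm.succ a) (Tm.app Tm.succ b)] [CForm.eq a b] := by
  have base := CProof.ax (EPA.mem (EPAAx.succInj 20 21))
  have h1 := (base.genAll 21 𝕆).instAll b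
    (CForm.freeFor_of_qf (by exact ⟨trivial, trivial⟩) b 21)
  have h2 := (h1.genAll 20 𝕆).instAll a
    (CForm.freeFor_of_qf (CForm.qf_substTm (by exact ⟨trivial, trivial⟩) 21 b) a 20)
  rw [hc] at h2
  exact h2.mpI (ofMem (CForm.eq (Tm.app Tm.succ a) (Tm.app Tm.succ b)) (by simp) (by simp))
    (ofMem (CForm.eq a b) (by simp) (by simp))

theorem succne_t (a : Tm 𝕆)
    (hc : (CForm.not (CForm.eq (Tm.app Tm.succ (v0 20)) Tm.zero)).substTm 20 a
        = CForm.not (CForm.eq (Tm.app Tm.succ a) Tm.zero)) :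
    CProof EPA [CForm.eq (Tm.app Tm.succ a) Tm.zero] [] := by
  have base := CProof.ax (EPA.mem (EPAAx.succNeZero 20))
  have h1 := (base.genAll 20 𝕆).instAll a trivial
  rw [hc] at h1
  exact h1.cutE (CProof.notL
    (ofMem (CForm.eq (Tm.app Tm.succ a) Tm.zero) (by simp) (by simp)))

/-- Leibniz rule: from `a = b` and `P = A[20 := a]` infer `Q = A[20 := b]`. -/
theorem leib_t (A : CForm) (hqf : A.qf) (a b : Tm 𝕆) (P Q : CForm)
    (hc : (((CForm.eq (v0 21) (v0 22)).imp
          (((A.substTm 20 (v0 21)).imp (A.substTm 20 (v0 22))))).substTm 22 b).substTm 21 a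
        = (CForm.eq a b).imp (P.imp Q)) :
    CProof EPA [CForm.eq a b, P] [Q] := by
  have base := CProof.ax (EPA.mem (EPAAx.eqSub A 20 21 22
    (CForm.freeFor_of_qf hqf _ _) (CForm.freeFor_of_qf hqf _ _)))
  have hqf1 : ((CForm.eq (v0 21) (v0 22)).imp
      ((A.substTm 20 (v0 21)).imp (A.substTm 20 (v0 22)))).qf :=
    ⟨trivial, CForm.qf_substTm hqf _ _, CForm.qf_substTm hqf _ _⟩
  have h1 := (base.genAll 22 𝕆).instAll b (CForm.freeFor_of_qf hqf1 b 22)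
  have h2 := (h1.genAll 21 𝕆).instAll a
    (CForm.freeFor_of_qf (CForm.qf_substTm hqf1 22 b) a 21)
  rw [hc] at h2
  refine h2.mpI (ofMem (CForm.eq a b) (by simp) (by simp)) ?_
  refine CProof.impL (ofMem P (by simp) (by simp)) (ofMem Q (by simp) (by simp))

end EqToolkit

/-! ### Structural substitution lemmas (for `simp`) -/

theorem Tm.subst_app {σ τ : Ty} (f : Tm (σ ⤳ τ)) (a : Tm σ) (n : ℕ) {ρ : Ty} (s : Tm ρ) :
    (f.app a).subst n s = (f.subst n s).app (a.subst n s) := rfl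
theorem Tm.subst_zero (n : ℕ) {ρ : Ty} (s : Tm ρ) : Tm.zero.subst n s = .zero := rfl
theorem Tm.subst_succ (n : ℕ) {ρ : Ty} (s : Tm ρ) : Tm.succ.subst n s = .succ := rfl
theorem Tm.subst_R (τ : Ty) (n : ℕ) {ρ : Ty} (s : Tm ρ) : (Tm.R τ).subst n s = .R τ := rfl
theorem Tm.subst_var_of_ne {m n : ℕ} {σ ρ : Ty} (s : Tm σ) (h : ¬(m = n ∧ ρ = σ)) :
    (Tm.var m ρ).subst n s = .var m ρ := dif_neg h
theorem Tm.subst_lam_of_ne {m n : ℕ} {σ ρ τ : Ty} (t : Tm τ) (s : Tm σ)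
    (h : ¬(m = n ∧ ρ = σ)) :
    (Tm.lam m ρ t).subst n s = .lam m ρ (t.subst n s) := if_neg h
theorem Tm.subst_lam_same {n : ℕ} {σ τ : Ty} (t : Tm τ) (s : Tm σ) :
    (Tm.lam n σ t).subst n s = .lam n σ t := if_pos ⟨rfl, rfl⟩

theorem CForm.substTm_eq' (a b : Tm 𝕆) (n : ℕ) {σ : Ty} (s : Tm σ) :
    (CForm.eq a b).substTm n s = .eq (a.subst n s) (b.subst n s) := rfl
theorem CForm.substTm_not (A : CForm) (n : ℕ) {σ : Ty} (s : Tm σ) :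
    (CForm.not A).substTm n s = .not (A.substTm n s) := rfl
theorem CForm.substTm_and (A B : CForm) (n : ℕ) {σ : Ty} (s : Tm σ) :
    (CForm.and A B).substTm n s = .and (A.substTm n s) (B.substTm n s) := rfl
theorem CForm.substTm_or (A B : CForm) (n : ℕ) {σ : Ty} (s : Tm σ) :
    (CForm.or A B).substTm n s = .or (A.substTm n s) (B.substTm n s) := rfl
theorem CForm.substTm_imp (A B : CForm) (n : ℕ) {σ : Ty} (s : Tm σ) :
    (CForm.imp A B).substTm n s = .imp (A.substTm n s) (B.substTm n s) := rfl
theorem CForm.substTm_all_of_ne {m n : ℕ} {τ σ : Ty} (A : CForm) (s : Tm σ)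
    (h : ¬(m = n ∧ τ = σ)) :
    (CForm.all m τ A).substTm n s = .all m τ (A.substTm n s) := by
  simp [CForm.substTm, h]
theorem CForm.substTm_ex_of_ne {m n : ℕ} {τ σ : Ty} (A : CForm) (s : Tm σ)
    (h : ¬(m = n ∧ τ = σ)) :
    (CForm.ex m τ A).substTm n s = .ex m τ (A.substTm n s) := by
  simp [CForm.substTm, h]

/-! ### Sequent conveniences -/

namespace CProof

variable {Ax : Set CForm} {Γ Δ : List CForm} {A B : CForm}

/-- A proven theorem may be placed in any succedent. -/
theorem toSeq (h : CProof Ax [] [A]) : CProof Ax Γ (A :: Δ) := by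
  have h1 : CProof Ax (Γ ++ []) [A] := h.wkLs Γ
  have h2 : CProof Ax Γ [A] := by simpa using h1
  have h3 : CProof Ax Γ (Δ ++ [A]) := h2.wkRs Δ
  exact h3.permR (by simpa using (List.perm_middle (a := A) (l₁ := Δ) (l₂ := ([] : List CForm))))

end CProof

section Arith

open CProof

theorem trans_thm {a b c : Tm 𝕆}
    (h1 : CProof EPA [] [CForm.eq a b]) (h2 : CProof EPA [] [CForm.eq b c])
    (hc : (((((CForm.eq (v0 20) (v0 21)).and (CForm.eq (v0 21) (v0 22))).imp
          (CForm.eq (v0 20) (v0 22))).substTm 22 c).substTm 21 b).substTm 20 a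
        = ((CForm.eq a b).and (CForm.eq b c)).imp (CForm.eq a c)) :
    CProof EPA [] [CForm.eq a c] := by
  have p := trans_t a b c hc
  have q := h2.cutE (p.permL (List.Perm.swap _ _ _))
  exact h1.cutE q

theorem sym_thm {a b : Tm 𝕆}
    (h1 : CProof EPA [] [CForm.eq a b])
    (hc : (((CForm.eq (v0 20) (v0 21)).imp (CForm.eq (v0 21) (v0 20))).substTm 21 b).substTm
        20 a = (CForm.eq a b).imp (CForm.eq b a)) : CProof EPA [] [CForm.eq b a] :=
  h1.cutE (sym_t a b hc)

/-- The step functional of addition. -/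
def addStep : Tm Ty2 := .lam 2 𝕆 (.lam 3 𝕆 (Tm.succ.app (v0 3)))
/-- The body of addition. -/
def addBody : Tm Ty1 := .lam 1 𝕆 (recO (v0 0) addStep (v0 1))
/-- `(λ-term for addition applied to the variable 4)` -/
def addBody4 : Tm Ty1 := .lam 1 𝕆 (recO (v0 4) addStep (v0 1))
/-- `4 + 5`. -/
def add45 : Tm 𝕆 := (addT.app (v0 4)).app (v0 5)
/-- The recursor normal form of `4 + b`. -/
def recA (b : Tm 𝕆) : Tm 𝕆 := recO (v0 4) addStep b

theorem addT_eq : addT = .lam 0 𝕆 addBody := rfl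

theorem beta_add : CProof EPA []
    [CForm.all 5 𝕆 (.eq ((addT.app (v0 4)).app (v0 5)) (addBody4.app (v0 5)))] := by
  have hffi : Tm.FreeForIn (v0 4) 0 addBody := by
    refine Or.inr (Or.inr ⟨by simp [Tm.fvars], ?_⟩)
    refine ⟨⟨⟨trivial, trivial⟩, Or.inl ?_⟩, trivial⟩
    simp [Tm.fvars, addStep]
  have base := CProof.ax (EPA.mem (EPAAx.axBeta 0 addBody (v0 4) hffi))
  exact base

theorem beta_rec (b : Tm 𝕆) :
    CProof EPA [] [CForm.eq (addBody4.app b) (recA b)] := by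
  have hffi : Tm.FreeForIn b 1 (recO (v0 4) addStep (v0 1)) := by
    refine ⟨⟨⟨trivial, trivial⟩, Or.inl ?_⟩, trivial⟩
    simp [Tm.fvars, addStep]
  have base := CProof.ax (EPA.mem (EPAAx.axBeta 1 (recO (v0 4) addStep (v0 1)) b hffi))
  exact base

theorem add_eq_rec (b : Tm 𝕆)
    (hc1 : (CForm.eq ((addT.app (v0 4)).app (v0 5)) (addBody4.app (v0 5))).substTm 5 b
        = CForm.eq ((addT.app (v0 4)).app b) (addBody4.app b))
    (hc2 : (((((CForm.eq (v0 20) (v0 21)).and (CForm.eq (v0 21) (v0 22))).imp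
          (CForm.eq (v0 20) (v0 22))).substTm 22 (recA b)).substTm 21
            (addBody4.app b)).substTm 20 ((addT.app (v0 4)).app b)
        = ((CForm.eq ((addT.app (v0 4)).app b) (addBody4.app b)).and
            (CForm.eq (addBody4.app b) (recA b))).imp
          (CForm.eq ((addT.app (v0 4)).app b) (recA b))) :
    CProof EPA [] [CForm.eq ((addT.app (v0 4)).app b) (recA b)] := by
  have h1 := beta_add.instAll b trivial
  rw [hc1] at h1
  exact trans_thm h1 (beta_rec b) hc2

/-- `4 + 0 = 4`. -/
theorem plus_zero : CProof EPA [] [CForm.eq ((addT.app (v0 4)).app .zero) (v0 4)] := by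
  have e1 := add_eq_rec .zero rfl rfl
  have e2 : CProof EPA [] [CForm.eq (recA .zero) (v0 4)] :=
    CProof.ax (EPA.mem (EPAAx.axR0 (v0 4) addStep))
  exact trans_thm e1 e2 rfl

/-- Theorem-level Leibniz rule. -/
theorem leib_thm (A : CForm) (hqf : A.qf) (a b : Tm 𝕆) (P Q : CForm)
    (hc : (((CForm.eq (v0 21) (v0 22)).imp
          (((A.substTm 20 (v0 21)).imp (A.substTm 20 (v0 22))))).substTm 22 b).substTm 21 a
        = (CForm.eq a b).imp (P.imp Q))
    (hab : CProof EPA [] [CForm.eq a b]) (hP : CProof EPA [] [P]) :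
    CProof EPA [] [Q] := by
  have p := leib_t A hqf a b P Q hc
  exact hab.cutE (hP.cutE (p.permL (List.Perm.swap _ _ _)))

theorem succ_cong {a b : Tm 𝕆}
    (h : CProof EPA [] [CForm.eq a b])
    (hc : (((CForm.eq (v0 21) (v0 22)).imp
          ((((CForm.eq (Tm.app Tm.succ a) (Tm.app Tm.succ (v0 20))).substTm 20
              (v0 21)).imp ((CForm.eq (Tm.app Tm.succ a)
                (Tm.app Tm.succ (v0 20))).substTm 20 (v0 22))))).substTm 22 b).substTm 21 a
        = (CForm.eq a b).imp ((CForm.eq (Tm.app Tm.succ a) (Tm.app Tm.succ a)).imp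
            (CForm.eq (Tm.app Tm.succ a) (Tm.app Tm.succ b)))) :
    CProof EPA [] [CForm.eq (Tm.app Tm.succ a) (Tm.app Tm.succ b)] :=
  leib_thm (CForm.eq (Tm.app Tm.succ a) (Tm.app Tm.succ (v0 20))) trivial a b
    _ _ hc h (refl_t _)

/-- `4 + succ 5 = succ (4 + 5)`. -/
theorem plus_succ : CProof EPA []
    [CForm.eq ((addT.app (v0 4)).app (Tm.app Tm.succ (v0 5)))
      (Tm.app Tm.succ add45)] := by
  -- 4 + s5 = rec (s5)
  have e1 := add_eq_rec (Tm.app Tm.succ (v0 5)) rfl rfl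
  -- rec (s5) = step 5 (rec 5)
  have e2 : CProof EPA [] [CForm.eq (recA (Tm.app Tm.succ (v0 5)))
      ((addStep.app (v0 5)).app (recA (v0 5)))] :=
    CProof.ax (EPA.mem (EPAAx.axRS (v0 4) addStep (v0 5)))
  -- step 5 (rec 5) = succ (rec 5)
  have e3a : CProof EPA [] [CForm.all 6 𝕆 (.eq ((addStep.app (v0 5)).app (v0 6))
      ((Tm.lam 3 𝕆 (Tm.succ.app (v0 3))).app (v0 6)))] := by
    have hffi : Tm.FreeForIn (v0 5) 2 (Tm.lam 3 𝕆 (Tm.succ.app (v0 3))) := by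
      refine Or.inr (Or.inr ⟨by simp [Tm.fvars], ⟨trivial, trivial⟩⟩)
    exact CProof.ax (EPA.mem (EPAAx.axBeta 2 (Tm.lam 3 𝕆 (Tm.succ.app (v0 3))) (v0 5) hffi))
  have e3a' := e3a.instAll (recA (v0 5)) trivial
  rw [show (CForm.eq ((addStep.app (v0 5)).app (v0 6))
      ((Tm.lam 3 𝕆 (Tm.succ.app (v0 3))).app (v0 6))).substTm 6 (recA (v0 5))
    = CForm.eq ((addStep.app (v0 5)).app (recA (v0 5)))
      ((Tm.lam 3 𝕆 (Tm.succ.app (v0 3))).app (recA (v0 5))) from rfl] at e3a'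
  have e3b : CProof EPA [] [CForm.eq ((Tm.lam 3 𝕆 (Tm.succ.app (v0 3))).app (recA (v0 5)))
      (Tm.app Tm.succ (recA (v0 5)))] := by
    have hffi : Tm.FreeForIn (recA (v0 5)) 3 (Tm.succ.app (v0 3)) :=
      ⟨trivial, trivial⟩
    exact CProof.ax (EPA.mem (EPAAx.axBeta 3 (Tm.succ.app (v0 3)) (recA (v0 5)) hffi))
  have e3 := trans_thm e3a' e3b rfl
  -- succ (rec 5) = succ (4 + 5)
  have er : CProof EPA [] [CForm.eq add45 (recA (v0 5))] := add_eq_rec (v0 5) rfl rfl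
  have er' := sym_thm er rfl
  have e4 := succ_cong er' rfl
  exact trans_thm (trans_thm (trans_thm e1 e2 rfl) e3 rfl) e4 rfl

end Arith

/-! ### More sequent plumbing -/

namespace CProof

variable {Ax : Set CForm} {Γ Δ : List CForm} {A B C : CForm}

theorem extendR (h : CProof Ax Γ [A]) : CProof Ax Γ (A :: Δ) := by
  have h1 := h.wkRs Δ
  exact h1.permR (by simpa using (List.perm_middle (a := A) (l₁ := Δ) (l₂ := ([] : List CForm))))

theorem wkTail (h : CProof Ax [A] Δ) (L : List CForm) : CProof Ax (A :: L) Δ := by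
  have h1 := h.wkLs L
  exact h1.permL (by simpa using (List.perm_middle (a := A) (l₁ := L) (l₂ := ([] : List CForm))))

theorem conMem (hmem : A ∈ Γ) (h : CProof Ax (A :: Γ) Δ) : CProof Ax Γ Δ := by
  obtain ⟨s, t, rfl⟩ := List.append_of_mem hmem
  have hp : (s ++ A :: t).Perm (A :: (s ++ t)) := List.perm_middle
  have h1 : CProof Ax (A :: A :: (s ++ t)) Δ := h.permL (hp.cons A)
  exact h1.conL.permL hp.symm

/-- Use a universal hypothesis from the context. -/
theorem useAll {n : ℕ} {σ : Ty} (hmem : (CForm.all n σ A) ∈ Γ) (t : Tm σ)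
    (hff : CForm.FreeFor t n A) (hcont : CProof Ax ((A.substTm n t) :: Γ) Δ) :
    CProof Ax Γ Δ :=
  conMem hmem (CProof.allL t hff hcont)

/-- Use a proven implication whose antecedent is in the context. -/
theorem useImp1 (h : CProof Ax [] [A.imp B]) (hA : A ∈ Γ)
    (hcont : CProof Ax (B :: Γ) Δ) : CProof Ax Γ Δ :=
  h.mpI (ofMem A hA (by simp)) hcont

/-- Use a proven double implication whose antecedents are in the context. -/
theorem useImp2 (h : CProof Ax [] [A.imp (B.imp C)]) (hA : A ∈ Γ) (hB : B ∈ Γ)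
    (hcont : CProof Ax (C :: Γ) Δ) : CProof Ax Γ Δ := by
  refine useImp1 h hA ?_
  refine CProof.impL (ofMem B (by simp [hB]) (by simp)) hcont

/-- Package a two-hypothesis sequent as a nested implication. -/
theorem imp2 (h : CProof Ax [A, B] [C]) : CProof Ax [] [A.imp (B.imp C)] := by
  refine CProof.impR (CProof.impR ?_)
  exact h.permL (List.Perm.swap _ _ _)

/-- Package a one-hypothesis sequent as an implication. -/
theorem imp1 (h : CProof Ax [A] [B]) : CProof Ax [] [A.imp B] := CProof.impR h

theorem seqOfEmpty (h : CProof Ax Γ []) : CProof Ax Γ Δ := by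
  have h1 := h.wkRs Δ
  simpa using h1

end CProof

/-! ### The zero-or-successor case distinction -/

section ZS

open CProof

/-- `5 = 0 ∨ ∃7 (5 = succ 7)`. -/
def DZ : CForm :=
  (CForm.eq (v0 5) .zero).or (.ex 7 𝕆 (.eq (v0 5) (Tm.app Tm.succ (v0 7))))

theorem zs : CProof EPA [] [DZ] := by
  have hff : CForm.FreeFor (Tm.app Tm.succ (v0 5)) 5 DZ := by
    refine ⟨trivial, Or.inr ⟨by intro hm; simp [Tm.fvars] at hm, trivial⟩⟩
  have ind := CProof.ax (EPA.mem (EPAAx.axInd DZ 5 hff))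
  have base : CProof EPA [] [DZ.substTm 5 Tm.zero] := by
    rw [show DZ.substTm 5 Tm.zero
      = (CForm.eq .zero .zero).or (.ex 7 𝕆 (.eq .zero (Tm.app Tm.succ (v0 7)))) from rfl]
    exact CProof.orR ((refl_t .zero).toSeq)
  have step : CProof EPA []
      [CForm.all 5 𝕆 (DZ.imp (DZ.substTm 5 (Tm.app Tm.succ (v0 5))))] := by
    refine CProof.genAll 5 𝕆 (CProof.impR ?_)
    rw [show DZ.substTm 5 (Tm.app Tm.succ (v0 5))
      = (CForm.eq (Tm.app Tm.succ (v0 5)) .zero).or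
          (.ex 7 𝕆 (.eq (Tm.app Tm.succ (v0 5)) (Tm.app Tm.succ (v0 7)))) from rfl]
    refine CProof.orR (CProof.permR ?_ (List.Perm.swap _ _ _))
    refine CProof.exR (t := v0 5) trivial ?_
    rw [show (CForm.eq (Tm.app Tm.succ (v0 5)) (Tm.app Tm.succ (v0 7))).substTm 7 (v0 5)
      = CForm.eq (Tm.app Tm.succ (v0 5)) (Tm.app Tm.succ (v0 5)) from rfl]
    exact (refl_t _).toSeq
  have h1 := ind.mpI (CProof.andR base.toSeq step.toSeq) (CProof.id (.all 5 𝕆 DZ))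
  have h2 := h1.instAll (v0 5) (by
    exact ⟨trivial, Or.inr ⟨by intro hm; simp [Tm.fvars] at hm, trivial⟩⟩)
  rwa [CForm.substTm_self] at h2

end ZS

/-! ### Closedness of the coding terms -/

theorem addT_fvars : addT.fvars = ∅ := by
  ext ⟨m, τ⟩
  simp [addT, recO, Tm.fvars, Prod.ext_iff]

theorem triT_fvars : triT.fvars = ∅ := by
  ext ⟨m, τ⟩
  simp [triT, addT, recO, Tm.fvars, Prod.ext_iff]

theorem pairT_fvars : pairT.fvars = ∅ := by
  ext ⟨m, τ⟩
  simp [pairT, triT, addT, recO, Tm.fvars, Prod.ext_iff]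

theorem seqCodeT_fvars : seqCodeT.fvars = ∅ := by
  ext ⟨m, τ⟩
  simp [seqCodeT, pairT, triT, addT, recO, Tm.fvars, Prod.ext_iff]

theorem codeAt_fvars (u w : Tm 𝕆) :
    (codeAt (.var 1 Ty1) u w).fvars = {((1:ℕ), Ty1)} ∪ u.fvars ∪ w.fvars := by
  simp [codeAt, Tm.fvars, seqCodeT_fvars]

/-! ### The main classical derivation -/

section Main

open CProof

variable (tch : Tm (Ty1 ⤳ Ty1 ⤳ 𝕆 ⤳ 𝕆 ⤳ 𝕆))

/-- `x(⟨u⟩ * ȳv) = 0`. -/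
def EFm (u v : Tm 𝕆) : CForm :=
  .eq ((Tm.var 0 Ty1).app (codeAt (.var 1 Ty1) u v)) .zero
/-- `s < t` with bound variable `5`. -/
def LTe (s t : Tm 𝕆) : CForm :=
  .ex 5 𝕆 (.eq ((addT.app s).app (Tm.app Tm.succ (v0 5))) t)
/-- `∀ w < t, x(⟨u₂⟩ * ȳw) = 0`. -/
def ZFm (t : Tm 𝕆) : CForm := .all 4 𝕆 ((LTe (v0 4) t).imp (EFm (v0 2) (v0 4)))
/-- `∃ v A_at(x, y, u₂, v)`. -/
def ExAF : CForm := .ex 3 𝕆 (aAt tch (.var 0 Ty1) (.var 1 Ty1) (v0 2) (v0 3))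
/-- The induction formula. -/
def CFm : CForm := (ZFm (v0 6)).or (ExAF tch)
/-- The instantiated specification of the characteristic term. -/
def specIff (v : Tm 𝕆) : CForm :=
  iffC (aAt tch (.var 0 Ty1) (.var 1 Ty1) (v0 2) v)
    ((CForm.not (EFm (v0 2) v)).and (ZFm v))

variable {tch}

theorem freeFor_ZFm {σ : Ty} (t : Tm σ) (n : ℕ) (w : Tm 𝕆)
    (h4 : ((4:ℕ), 𝕆) ∉ t.fvars) (h5 : ((5:ℕ), 𝕆) ∉ t.fvars) :
    CForm.FreeFor t n (ZFm w) :=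
  Or.inr ⟨h4, ⟨Or.inr ⟨h5, trivial⟩, trivial⟩⟩

theorem freeFor_specIff {σ : Ty} (t : Tm σ) (n : ℕ) (w : Tm 𝕆)
    (h4 : ((4:ℕ), 𝕆) ∉ t.fvars) (h5 : ((5:ℕ), 𝕆) ∉ t.fvars) :
    CForm.FreeFor t n (specIff tch w) :=
  ⟨⟨trivial, ⟨trivial, freeFor_ZFm t n w h4 h5⟩⟩,
    ⟨⟨trivial, freeFor_ZFm t n w h4 h5⟩, trivial⟩⟩

theorem aAt_subst (htc : tch.Closed) (n : ℕ) (s : Tm 𝕆) (u w : Tm 𝕆) :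
    (aAt tch (.var 0 Ty1) (.var 1 Ty1) u w).substTm n s
      = aAt tch (.var 0 Ty1) (.var 1 Ty1) (u.subst n s) (w.subst n s) := by
  have h0 : (Tm.var 0 Ty1).subst n s = .var 0 Ty1 :=
    Tm.subst_var_of_ne s (fun h => Ty.noConfusion h.2)
  have h1 : (Tm.var 1 Ty1).subst n s = .var 1 Ty1 :=
    Tm.subst_var_of_ne s (fun h => Ty.noConfusion h.2)
  have ht : tch.subst n s = tch := Tm.subst_eq_of_not_fvar tch s (by
    rw [show tch.fvars = ∅ from htc]; exact Set.notMem_empty _)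
  simp only [aAt, CForm.substTm_eq', Tm.subst_app, Tm.subst_zero, h0, h1, ht]

theorem spec_inst (htc : tch.Closed) (hspec : CProof EPA [] [chSpec tch]) (v : Tm 𝕆)
    (hff : CForm.FreeFor v 3 (specIff tch (v0 3)))
    (hc : (specIff tch (v0 3)).substTm 3 v = specIff tch v) :
    CProof EPA [] [specIff tch v] := by
  have h0 : CProof EPA []
      [.all 0 Ty1 (.all 1 Ty1 (.all 2 𝕆 (.all 3 𝕆 (specIff tch (v0 3)))))] := hspec
  have ffb : ∀ {σ : Ty} (t : Tm σ) (n : ℕ),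
      ((4:ℕ), 𝕆) ∉ t.fvars → ((5:ℕ), 𝕆) ∉ t.fvars →
      CForm.FreeFor t n (specIff tch (v0 3)) := fun t n h4 h5 => freeFor_specIff t n _ h4 h5
  have s0 := h0.instAll (Tm.var 0 Ty1) (Or.inr ⟨by intro hm; simp [Tm.fvars] at hm,
    Or.inr ⟨by intro hm; simp [Tm.fvars] at hm,
      Or.inr ⟨by intro hm; simp [Tm.fvars] at hm,
        ffb _ _ (by intro hm; simp [Tm.fvars] at hm) (by intro hm; simp [Tm.fvars] at hm)⟩⟩⟩)
  rw [CForm.substTm_self] at s0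
  have s1 := s0.instAll (Tm.var 1 Ty1) (Or.inr ⟨by intro hm; simp [Tm.fvars] at hm,
    Or.inr ⟨by intro hm; simp [Tm.fvars] at hm,
      ffb _ _ (by intro hm; simp [Tm.fvars] at hm) (by intro hm; simp [Tm.fvars] at hm)⟩⟩)
  rw [CForm.substTm_self] at s1
  have s2 := s1.instAll (v0 2) (Or.inr ⟨by intro hm; simp [Tm.fvars] at hm,
    ffb _ _ (by intro hm; simp [Tm.fvars] at hm) (by intro hm; simp [Tm.fvars] at hm)⟩)
  rw [CForm.substTm_self] at s2
  have s3 := s2.instAll v hff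
  rwa [hc] at s3

theorem spec3 (htc : tch.Closed) (hspec : CProof EPA [] [chSpec tch]) :
    CProof EPA [] [specIff tch (v0 3)] :=
  spec_inst htc hspec (v0 3)
    (freeFor_specIff _ _ _ (by intro hm; simp [Tm.fvars] at hm)
      (by intro hm; simp [Tm.fvars] at hm))
    (CForm.substTm_self _ 3 𝕆)

theorem spec6 (htc : tch.Closed) (hspec : CProof EPA [] [chSpec tch]) :
    CProof EPA [] [specIff tch (v0 6)] := by
  refine spec_inst htc hspec (v0 6)
    (freeFor_specIff _ _ _ (by intro hm; simp [Tm.fvars] at hm)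
      (by intro hm; simp [Tm.fvars] at hm)) ?_
  have hkey : (aAt tch (.var 0 Ty1) (.var 1 Ty1) (v0 2) (v0 3)).substTm 3 (v0 6)
      = aAt tch (.var 0 Ty1) (.var 1 Ty1) (v0 2) (v0 6) :=
    (aAt_subst htc 3 (v0 6) (v0 2) (v0 3)).trans rfl
  show iffC ((aAt tch (.var 0 Ty1) (.var 1 Ty1) (v0 2) (v0 3)).substTm 3 (v0 6))
    ((CForm.not (EFm (v0 2) (v0 6))).and (ZFm (v0 6))) = specIff tch (v0 6)
  rw [hkey]
  rfl

theorem ExAF_not_fvar6 (htc : tch.Closed) : ((6:ℕ), 𝕆) ∉ (ExAF tch).fvars := by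
  simp [ExAF, aAt, CForm.fvars, Tm.fvars, show tch.fvars = ∅ from htc]

theorem CFm_subst0 (htc : tch.Closed) :
    (CFm tch).substTm 6 Tm.zero = (ZFm Tm.zero).or (ExAF tch) := by
  show (ZFm Tm.zero).or ((ExAF tch).substTm 6 Tm.zero) = _
  rw [CForm.substTm_eq_of_not_fvar _ _ (ExAF_not_fvar6 htc)]

theorem CFm_substS (htc : tch.Closed) :
    (CFm tch).substTm 6 (Tm.app Tm.succ (v0 6))
      = (ZFm (Tm.app Tm.succ (v0 6))).or (ExAF tch) := by
  show (ZFm (Tm.app Tm.succ (v0 6))).or ((ExAF tch).substTm 6 (Tm.app Tm.succ (v0 6))) = _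
  rw [CForm.substTm_eq_of_not_fvar _ _ (ExAF_not_fvar6 htc)]

theorem CFm_subst3 (htc : tch.Closed) :
    (CFm tch).substTm 6 (v0 3) = (ZFm (v0 3)).or (ExAF tch) := by
  show (ZFm (v0 3)).or ((ExAF tch).substTm 6 (v0 3)) = _
  rw [CForm.substTm_eq_of_not_fvar _ _ (ExAF_not_fvar6 htc)]

/-- From the specification: `∀w<v zeros` yields `x(code) = 0 ∨ A_at` (classically). -/
theorem fromSpec {v : Tm 𝕆} (hsv : CProof EPA [] [specIff tch v]) :
    CProof EPA [ZFm v]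
      [EFm (v0 2) v, aAt tch (.var 0 Ty1) (.var 1 Ty1) (v0 2) v] := by
  refine hsv.cutE ?_
  refine CProof.andL ?_
  refine CProof.permL ?_ (List.Perm.swap _ _ _)
  refine CProof.impL ?_ ?_
  · refine CProof.andR (CProof.notR ?_) ?_
    · exact ofMem (EFm (v0 2) v) (by simp) (by simp)
    · exact ofMem (ZFm v) (by simp) (by simp)
  · exact ofMem (aAt tch (.var 0 Ty1) (.var 1 Ty1) (v0 2) v) (by simp) (by simp)

/-- Base case of the induction. -/
theorem baseC (htc : tch.Closed) : CProof EPA [] [(CFm tch).substTm 6 Tm.zero] := by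
  rw [CFm_subst0 htc]
  refine CProof.orR ?_
  refine CProof.allR (by simp) ?_ ?_
  · intro B hB
    simp only [List.mem_singleton] at hB
    subst hB
    simp [ExAF, aAt, CForm.fvars, Tm.fvars, show tch.fvars = ∅ from htc]
  refine CProof.impR ?_
  refine CProof.exL ?_ ?_ ?_
  · intro B hB; simp at hB
  · intro B hB
    simp only [List.mem_cons, List.mem_singleton, List.not_mem_nil, or_false] at hB
    rcases hB with rfl | hB
    · simp [codeAt, EFm, CForm.fvars, Tm.fvars, seqCodeT_fvars]
    · (try simp only [List.mem_singleton] at hB)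
      subst hB
      simp [ExAF, aAt, CForm.fvars, Tm.fvars, show tch.fvars = ∅ from htc]
  -- [ add(4, succ 5) = 0 ] ⊢ Δ
  refine (sym_thm plus_succ rfl).cutE ?_
  refine useImp2 (imp2 (trans_t (Tm.app Tm.succ add45)
    ((addT.app (v0 4)).app (Tm.app Tm.succ (v0 5))) Tm.zero rfl)) (by simp) (by simp) ?_
  exact CProof.seqOfEmpty ((succne_t add45 rfl).wkTail _)

/-- Step case of the induction. -/
theorem stepC (htc : tch.Closed) (hspec : CProof EPA [] [chSpec tch]) :
    CProof EPA [CFm tch] [(CFm tch).substTm 6 (Tm.app Tm.succ (v0 6))] := by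
  rw [CFm_substS htc]
  refine CProof.orL ?_ ?_
  swap
  · exact CProof.orR (ofMem (ExAF tch) (by simp) (by simp))
  refine CProof.orR ?_
  -- [ZFm 6] ⊢ [ZFm (succ 6), ExAF]
  refine CProof.cutF (A := EFm (v0 2) (v0 6)) ?_ ?_
  · -- b1 : [ZFm 6] ⊢ [E26, ZFm s6, ExAF]
    have hkey : (aAt tch (.var 0 Ty1) (.var 1 Ty1) (v0 2) (v0 3)).substTm 3 (v0 6)
        = aAt tch (.var 0 Ty1) (.var 1 Ty1) (v0 2) (v0 6) :=
      (aAt_subst htc 3 (v0 6) (v0 2) (v0 3)).trans rfl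
    have fs := fromSpec (spec6 htc hspec)
    have fs' := fs.wkR (ZFm (Tm.app Tm.succ (v0 6)))
    -- fs' : [ZFm6] ⊢ [ZFm s6, E26, aAt26]
    have p1 : List.Perm [ZFm (Tm.app Tm.succ (v0 6)), EFm (v0 2) (v0 6),
        aAt tch (.var 0 Ty1) (.var 1 Ty1) (v0 2) (v0 6)]
        [aAt tch (.var 0 Ty1) (.var 1 Ty1) (v0 2) (v0 6), EFm (v0 2) (v0 6),
          ZFm (Tm.app Tm.succ (v0 6))] := by
      refine (List.Perm.swap _ _ _).trans ?_
      refine ((List.Perm.swap _ _ _).cons _).trans ?_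
      exact List.Perm.swap _ _ _
    have fs'' := fs'.permR p1
    have fs3 : CProof EPA [ZFm (v0 6)]
        [ExAF tch, EFm (v0 2) (v0 6), ZFm (Tm.app Tm.succ (v0 6))] := by
      refine CProof.exR (t := v0 6) trivial ?_
      rw [hkey]
      exact fs''
    refine fs3.permR ?_
    refine (List.Perm.swap _ _ _).trans ?_
    exact (List.Perm.swap _ _ _).cons _
  · -- b2 : [E26, ZFm 6] ⊢ [ZFm s6, ExAF]
    refine CProof.allR ?_ ?_ ?_
    · intro B hB
      simp only [List.mem_cons, List.mem_singleton, List.not_mem_nil, or_false] at hB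
      rcases hB with rfl | rfl
      · simp [codeAt, EFm, CForm.fvars, Tm.fvars, seqCodeT_fvars]
      · simp [ZFm, LTe, EFm, CForm.fvars, Tm.fvars, seqCodeT_fvars, addT_fvars]
    · intro B hB
      simp only [List.mem_singleton] at hB
      subst hB
      simp [ExAF, aAt, CForm.fvars, Tm.fvars, show tch.fvars = ∅ from htc]
    refine CProof.impR ?_
    refine CProof.exL ?_ ?_ ?_
    · intro B hB
      simp only [List.mem_cons, List.mem_singleton, List.not_mem_nil, or_false] at hB
      rcases hB with rfl | rfl
      · simp [codeAt, EFm, CForm.fvars, Tm.fvars, seqCodeT_fvars]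
      · simp [codeAt, ZFm, LTe, EFm, CForm.fvars, Tm.fvars, seqCodeT_fvars, addT_fvars]
    · intro B hB
      simp only [List.mem_cons, List.mem_singleton, List.not_mem_nil, or_false] at hB
      rcases hB with rfl | rfl
      · simp [codeAt, EFm, CForm.fvars, Tm.fvars, seqCodeT_fvars]
      · simp [ExAF, aAt, CForm.fvars, Tm.fvars, show tch.fvars = ∅ from htc]
    -- [add(4, succ 5) = succ 6, E26, ZFm6] ⊢ [E24, ExAF]
    refine (sym_thm plus_succ rfl).cutE ?_
    refine useImp2 (imp2 (trans_t (Tm.app Tm.succ add45)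
      ((addT.app (v0 4)).app (Tm.app Tm.succ (v0 5))) (Tm.app Tm.succ (v0 6)) rfl))
      (by simp) (by simp) ?_
    refine useImp1 (imp1 (succinj_t add45 (v0 6) rfl)) (by simp) ?_
    -- head: add45 = 6
    refine zs.cutE ?_
    refine CProof.orL ?_ ?_
    · -- 5 = 0
      refine useImp2 (imp2 (leib_t (CForm.eq ((addT.app (v0 4)).app (v0 20)) (v0 6))
        trivial (v0 5) Tm.zero (CForm.eq add45 (v0 6))
        (CForm.eq ((addT.app (v0 4)).app Tm.zero) (v0 6)) rfl)) (by simp) (by simp) ?_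
      refine (sym_thm plus_zero rfl).cutE ?_
      refine useImp2 (imp2 (trans_t (v0 4) ((addT.app (v0 4)).app Tm.zero) (v0 6) rfl))
        (by simp) (by simp) ?_
      refine useImp1 (imp1 (sym_t (v0 4) (v0 6) rfl)) (by simp) ?_
      refine useImp2 (imp2 (leib_t (EFm (v0 2) (v0 20)) trivial (v0 6) (v0 4)
        (EFm (v0 2) (v0 6)) (EFm (v0 2) (v0 4)) rfl)) (by simp) (by simp) ?_
      exact ofMem (EFm (v0 2) (v0 4)) (by simp) (by simp)
    · -- 5 = succ 7
      refine CProof.exL ?_ ?_ ?_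
      · intro B hB
        simp only [List.mem_cons, List.mem_singleton, List.not_mem_nil, or_false] at hB
        rcases hB with rfl | rfl | rfl | rfl | rfl | rfl
        · simp [add45, CForm.fvars, Tm.fvars, addT_fvars]
        · simp [add45, CForm.fvars, Tm.fvars, addT_fvars]
        · simp [add45, CForm.fvars, Tm.fvars, addT_fvars]
        · simp [add45, CForm.fvars, Tm.fvars, addT_fvars]
        · simp [codeAt, EFm, CForm.fvars, Tm.fvars, seqCodeT_fvars]
        · simp [codeAt, ZFm, LTe, EFm, CForm.fvars, Tm.fvars, seqCodeT_fvars, addT_fvars]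
      · intro B hB
        simp only [List.mem_cons, List.mem_singleton, List.not_mem_nil, or_false] at hB
        rcases hB with rfl | rfl
        · simp [codeAt, EFm, CForm.fvars, Tm.fvars, seqCodeT_fvars]
        · simp [ExAF, aAt, CForm.fvars, Tm.fvars, show tch.fvars = ∅ from htc]
      -- head: 5 = succ 7
      refine useImp2 (imp2 (leib_t (CForm.eq ((addT.app (v0 4)).app (v0 20)) (v0 6))
        trivial (v0 5) (Tm.app Tm.succ (v0 7)) (CForm.eq add45 (v0 6))
        (CForm.eq ((addT.app (v0 4)).app (Tm.app Tm.succ (v0 7))) (v0 6)) rfl))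
        (by simp) (by simp) ?_
      -- head: add(4, succ 7) = 6
      refine CProof.useAll (A := (LTe (v0 4) (v0 6)).imp (EFm (v0 2) (v0 4)))
        (n := 4) (σ := 𝕆) (by simp [ZFm]) (v0 4)
        ⟨Or.inr ⟨by intro hm; simp [Tm.fvars] at hm, trivial⟩, trivial⟩ ?_
      rw [CForm.substTm_self]
      refine CProof.impL ?_ ?_
      · refine CProof.exR (t := v0 7) trivial ?_
        show CProof EPA _
          ((CForm.eq ((addT.app (v0 4)).app (Tm.app Tm.succ (v0 7))) (v0 6)) :: _)
        exact ofMem (CForm.eq ((addT.app (v0 4)).app (Tm.app Tm.succ (v0 7))) (v0 6))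
          (by simp) (by simp)
      · exact ofMem (EFm (v0 2) (v0 4)) (by simp) (by simp)

theorem indC (htc : tch.Closed) (hspec : CProof EPA [] [chSpec tch]) :
    CProof EPA [] [.all 6 𝕆 (CFm tch)] := by
  have hffInd : CForm.FreeFor (Tm.app Tm.succ (v0 6)) 6 (CFm tch) := by
    refine ⟨freeFor_ZFm _ _ _ (by intro hm; simp [Tm.fvars] at hm)
      (by intro hm; simp [Tm.fvars] at hm), Or.inr ⟨?_, trivial⟩⟩
    intro hm; simp [Tm.fvars] at hm
  have ind := CProof.ax (EPA.mem (EPAAx.axInd (CFm tch) 6 hffInd))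
  have stepAll := CProof.genAll 6 𝕆 (CProof.impR (stepC htc hspec))
  exact ind.mpI (CProof.andR (baseC htc).toSeq stepAll.toSeq) (CProof.id _)

theorem m4 (htc : tch.Closed) (hspec : CProof EPA [] [chSpec tch]) :
    CProof EPA [] [EFm (v0 2) (v0 3), ExAF tch] := by
  have hff3 : CForm.FreeFor (v0 3) 6 (CFm tch) := by
    refine ⟨freeFor_ZFm _ _ _ (by intro hm; simp [Tm.fvars] at hm)
      (by intro hm; simp [Tm.fvars] at hm), Or.inl ?_⟩
    intro hm
    rw [Set.mem_diff] at hm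
    exact absurd hm.1 (by simp [aAt, CForm.fvars, Tm.fvars, show tch.fvars = ∅ from htc])
  have h := (indC htc hspec).instAll (v0 3) hff3
  rw [CFm_subst3 htc] at h
  refine h.cutE ?_
  refine CProof.orL ?_ ?_
  swap
  · exact ofMem (ExAF tch) (by simp) (by simp)
  -- [ZFm 3] ⊢ [E23, ExAF]
  have P : CProof EPA [ZFm (v0 3)] [ExAF tch, EFm (v0 2) (v0 3)] := by
    refine CProof.exR (t := v0 3) trivial ?_
    rw [CForm.substTm_self]
    exact (fromSpec (spec3 htc hspec)).permR (List.Perm.swap _ _ _)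
  exact P.permR (List.Perm.swap _ _ _)

theorem mainClassical (htc : tch.Closed) (hspec : CProof EPA [] [chSpec tch]) :
    CProof EPA [haltsF (Tm.var 0 Ty1) (Tm.var 1 Ty1)]
      [.all 2 𝕆 (.ex 3 𝕆 (aAt tch (.var 0 Ty1) (.var 1 Ty1) (v0 2) (v0 3)))] := by
  refine CProof.allR ?_ (by simp) ?_
  · intro B hB
    simp only [List.mem_singleton] at hB
    subst hB
    intro hm
    rw [show CForm.fvars (haltsF (Tm.var 0 Ty1) (Tm.var 1 Ty1))
      = CForm.fvars (.ex 3 𝕆 (neqF ((Tm.var 0 Ty1).app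
          (codeAt (.var 1 Ty1) (v0 2) (v0 3))) .zero)) \ {((2:ℕ), 𝕆)} from rfl] at hm
    simp at hm
  -- [haltsF] ⊢ [.ex 3 aAt]
  refine CProof.useAll
    (A := .ex 3 𝕆 (neqF ((Tm.var 0 Ty1).app (codeAt (.var 1 Ty1) (v0 2) (v0 3))) .zero))
    (n := 2) (σ := 𝕆) (List.mem_singleton.mpr rfl) (v0 2)
    (Or.inr ⟨by intro hm; simp [Tm.fvars] at hm, trivial⟩) ?_
  rw [CForm.substTm_self]
  refine CProof.exL ?_ ?_ ?_
  · intro B hB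
    simp only [List.mem_singleton] at hB
    subst hB
    intro hm
    rw [show CForm.fvars (haltsF (Tm.var 0 Ty1) (Tm.var 1 Ty1))
      = CForm.fvars (.ex 3 𝕆 (neqF ((Tm.var 0 Ty1).app
          (codeAt (.var 1 Ty1) (v0 2) (v0 3))) .zero)) \ {((2:ℕ), 𝕆)} from rfl] at hm
    simp [neqF, codeAt, CForm.fvars, Tm.fvars, seqCodeT_fvars] at hm
  · intro B hB
    simp only [List.mem_singleton] at hB
    subst hB
    simp [aAt, CForm.fvars, Tm.fvars, show tch.fvars = ∅ from htc]
  refine CProof.notL ?_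
  exact (m4 htc hspec).wkL _

end Main

theorem halts_implies_forall_exists_Aat
    (tch : Tm (Ty1 ⤳ Ty1 ⤳ 𝕆 ⤳ 𝕆 ⤳ 𝕆)) (htc : tch.Closed)
    (hspec : CProof EPA [] [chSpec tch]) :
    LProof false false EPA
      [((haltsF (Tm.var 0 Ty1) (Tm.var 1 Ty1)).emb).neg,
        (CForm.all 2 𝕆 (.ex 3 𝕆
          (aAt tch (.var 0 Ty1) (.var 1 Ty1) (v0 2) (v0 3)))).emb] := by
  exact (mainClassical htc hspec).toLinear

end WR
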